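/- arXiv:0908.2616 — 3 statements merged into one kernel-verified Lean document; each statement's English description precedes it below -/
import Mathlib

section
/- (Theorem 1(i), interval-design convergence.) Consider the interval design with target p ∈ (0,1), margins Δp₁, Δp₂ > 0, and MTD u*. Suppose F(u*) ∈ (p−Δp₁, p+Δp₂) and u* is the unique level u ∈ {1,…,m} with F(u) ∈ [p−Δp₁, p+Δp₂]. Then almost surely there exists N such that X_n = u* for all n ≥ N; that is, the dose allocations converge almost surely to the MTD. -/
open MeasureTheory ProbabilityTheory Filter

noncomputable section

/-- Toxicity response of subject `i`: `Y i = 1` iff `U i ≤ F (X i)`. -/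
def resp {Ω : Type*} (F : ℕ → ℝ) (U : ℕ → Ω → ℝ) (X : ℕ → Ω → ℕ) (i : ℕ) (ω : Ω) : ℝ :=
  if U i ω ≤ F (X i ω) then 1 else 0

/-- Number of subjects among the first `n` assigned to dose level `u`. -/
def visits {Ω : Type*} (X : ℕ → Ω → ℕ) (u n : ℕ) (ω : Ω) : ℕ :=
  ((Finset.Icc 1 n).filter fun i => X i ω = u).card

/-- The martingale `M_n = ∑_{i=1}^n 1{X_i = u} (Y_i − F(u))`. -/
def Mart {Ω : Type*} (F : ℕ → ℝ) (U : ℕ → Ω → ℝ) (X : ℕ → Ω → ℕ) (u n : ℕ) (ω : Ω) : ℝ :=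
  ∑ i ∈ Finset.Icc 1 n, (if X i ω = u then (1:ℝ) else 0) * (resp F U X i ω - F u)

/-- Empirical toxicity frequency at dose `u` after `n` subjects. -/
def Fhat {Ω : Type*} (F : ℕ → ℝ) (U : ℕ → Ω → ℝ) (X : ℕ → Ω → ℕ) (u n : ℕ) (ω : Ω) : ℝ :=
  (∑ i ∈ Finset.Icc 1 n, if X i ω = u then resp F U X i ω else 0) / (visits X u n ω : ℝ)

/-- The filtration `ℱ_n = σ(U_1, …, U_n)`. -/
def natFilt {Ω : Type*} [mΩ : MeasurableSpace Ω] (U : ℕ → Ω → ℝ)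
    (hU : ∀ i, Measurable (U i)) : Filtration ℕ mΩ where
  seq n := ⨆ i ∈ Finset.Icc 1 n, MeasurableSpace.comap (U i) inferInstance
  mono' := fun a b hab => by
    refine iSup₂_le fun i hi => ?_
    refine le_iSup₂_of_le i ?_ le_rfl
    rw [Finset.mem_Icc] at hi ⊢
    exact ⟨hi.1, hi.2.trans hab⟩
  le' := fun n => iSup₂_le fun i _ => (hU i).comap_le

/-- The interval design transition rule with target `p` and margins `Δ₁, Δ₂`:
repeat the current dose if the empirical rate at it lies in `(p−Δ₁, p+Δ₂)`, escalate one
level (boundary permitting) if it is `≤ p−Δ₁`, and de-escalate one level (boundary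
permitting) if it is `≥ p+Δ₂`. -/
def intervalRule {Ω : Type*} (m : ℕ) (p Δ₁ Δ₂ : ℝ) (F : ℕ → ℝ) (U : ℕ → Ω → ℝ)
    (X : ℕ → Ω → ℕ) : Prop :=
  ∀ n, 1 ≤ n → ∀ ω : Ω,
    (p - Δ₁ < Fhat F U X (X n ω) n ω → Fhat F U X (X n ω) n ω < p + Δ₂ →
      X (n + 1) ω = X n ω) ∧
    (Fhat F U X (X n ω) n ω ≤ p - Δ₁ → X (n + 1) ω = min (X n ω + 1) m) ∧
    (p + Δ₂ ≤ Fhat F U X (X n ω) n ω → X (n + 1) ω = max (X n ω - 1) 1)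

namespace IntervalDesignAux
open Finset Topology NNReal ENNReal

lemma Icc_one_eq_Ioc_zero (a : ℕ) : Finset.Icc 1 a = Finset.Ioc 0 a := by
  ext i; simp only [Finset.mem_Icc, Finset.mem_Ioc]; omega

lemma weighted_avg_zero (c e b : ℕ → ℝ) (hc : ∀ i, 1 ≤ i → 0 ≤ c i)
    (hcb : ∀ n, ∑ i ∈ Icc 1 n, c i ≤ b (n + 1))
    (hb1 : ∀ n, 1 ≤ n → 1 ≤ b n) (hb : Tendsto b atTop atTop)
    (he : Tendsto e atTop (𝓝 0)) :
    Tendsto (fun n => (∑ i ∈ Icc 1 n, c i * e i) / b (n + 1)) atTop (𝓝 0) := by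
  rw [NormedAddCommGroup.tendsto_nhds_zero]
  intro ε hε
  obtain ⟨N, hN⟩ : ∃ N : ℕ, ∀ i ≥ N, |e i| ≤ ε / 4 := by
    have := (NormedAddCommGroup.tendsto_nhds_zero.1 he) (ε / 4) (by positivity)
    obtain ⟨N, hN⟩ := eventually_atTop.1 this
    exact ⟨N, fun i hi => le_of_lt (by simpa [Real.norm_eq_abs] using hN i hi)⟩
  set C : ℝ := |∑ i ∈ Icc 1 N, c i * e i| with hC
  have hCb : Tendsto (fun n => C / b (n + 1)) atTop (𝓝 0) :=
    Tendsto.div_atTop tendsto_const_nhds (hb.comp (tendsto_add_atTop_nat 1))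
  have h2 : ∀ᶠ n in atTop, C / b (n + 1) < ε / 2 :=
    (NormedAddCommGroup.tendsto_nhds_zero.1 hCb (ε / 2) (by positivity)).mono
      (fun n hn => lt_of_le_of_lt ((le_abs_self _).trans (abs_div _ _).le)
        (by simpa [Real.norm_eq_abs] using hn))
  filter_upwards [h2, eventually_ge_atTop N] with n hn hnN
  have hbpos : (0:ℝ) < b (n + 1) := lt_of_lt_of_le one_pos (hb1 (n+1) (by omega))
  have hsplit : ∑ i ∈ Icc 1 n, c i * e i
      = (∑ i ∈ Icc 1 N, c i * e i) + ∑ i ∈ Ioc N n, c i * e i := by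
    rw [Icc_one_eq_Ioc_zero, Icc_one_eq_Ioc_zero]
    exact (Finset.sum_Ioc_consecutive _ (Nat.zero_le N) hnN).symm
  have htail : |∑ i ∈ Ioc N n, c i * e i| ≤ (ε / 4) * b (n + 1) := by
    calc |∑ i ∈ Ioc N n, c i * e i| ≤ ∑ i ∈ Ioc N n, |c i * e i| :=
          Finset.abs_sum_le_sum_abs _ _
      _ ≤ ∑ i ∈ Ioc N n, c i * (ε / 4) := by
          refine Finset.sum_le_sum fun i hi => ?_
          have hi1 : 1 ≤ i := by have := (Finset.mem_Ioc.1 hi).1; omega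
          rw [abs_mul, abs_of_nonneg (hc i hi1)]
          exact mul_le_mul_of_nonneg_left (hN i (Finset.mem_Ioc.1 hi).1.le) (hc i hi1)
      _ = (∑ i ∈ Ioc N n, c i) * (ε / 4) := by rw [Finset.sum_mul]
      _ ≤ (∑ i ∈ Icc 1 n, c i) * (ε / 4) := by
          refine mul_le_mul_of_nonneg_right ?_ (by positivity)
          rw [Icc_one_eq_Ioc_zero]
          refine Finset.sum_le_sum_of_subset_of_nonneg
            (Finset.Ioc_subset_Ioc (Nat.zero_le N) le_rfl) fun i hi _ => ?_
          exact hc i (by have := (Finset.mem_Ioc.1 hi).1; omega)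
      _ ≤ b (n + 1) * (ε / 4) := mul_le_mul_of_nonneg_right (hcb n) (by positivity)
      _ = (ε / 4) * b (n + 1) := mul_comm _ _
  have hnum : |∑ i ∈ Icc 1 n, c i * e i| ≤ C + (ε / 4) * b (n + 1) := by
    rw [hsplit]
    exact (abs_add_le _ _).trans (add_le_add le_rfl htail)
  calc ‖(∑ i ∈ Icc 1 n, c i * e i) / b (n + 1)‖
      = |∑ i ∈ Icc 1 n, c i * e i| / b (n + 1) := by
        rw [Real.norm_eq_abs, abs_div, abs_of_pos hbpos]
    _ ≤ (C + (ε / 4) * b (n + 1)) / b (n + 1) := by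
        gcongr
    _ = C / b (n + 1) + ε / 4 := by
        rw [add_div, mul_div_assoc, div_self hbpos.ne', mul_one]
    _ < ε / 2 + ε / 4 := by linarith
    _ < ε := by linarith

lemma kronecker (a b : ℕ → ℝ) (hb1 : ∀ n, 1 ≤ n → 1 ≤ b n)
    (hmono : ∀ n, 1 ≤ n → b n ≤ b (n + 1)) (hb : Tendsto b atTop atTop) (L : ℝ)
    (hs : Tendsto (fun n => ∑ i ∈ Icc 1 n, a i / b i) atTop (𝓝 L)) :
    Tendsto (fun n => (∑ i ∈ Icc 1 n, a i) / b n) atTop (𝓝 0) := by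
  set s : ℕ → ℝ := fun n => ∑ i ∈ Icc 1 n, a i / b i with hsdef
  set c : ℕ → ℝ := fun i => b (i + 1) - b i with hcdef
  have habel : ∀ n, ∑ i ∈ Icc 1 (n + 1), a i
      = b (n + 1) * s (n + 1) - ∑ i ∈ Icc 1 n, c i * s i := by
    intro n
    induction n with
    | zero =>
        simp only [hsdef, hcdef]
        rw [Finset.Icc_self, Finset.sum_singleton, Finset.sum_singleton]
        rw [show Finset.Icc 1 0 = ∅ from rfl, Finset.sum_empty, sub_zero]
        rw [mul_div_cancel₀]
        exact ne_of_gt (lt_of_lt_of_le one_pos (hb1 1 le_rfl))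
    | succ n ih =>
        rw [Finset.sum_Icc_succ_top (by omega : 1 ≤ n + 1 + 1) a, ih,
          Finset.sum_Icc_succ_top (by omega : 1 ≤ n + 1) (fun i => c i * s i)]
        have hs1 : s (n + 1 + 1) = s (n + 1) + a (n + 1 + 1) / b (n + 1 + 1) :=
          Finset.sum_Icc_succ_top (by omega : 1 ≤ n + 1 + 1) _
        have hbne : b (n + 1 + 1) ≠ 0 :=
          ne_of_gt (lt_of_lt_of_le one_pos (hb1 (n + 1 + 1) (by omega)))
        rw [hs1, hcdef]
        field_simp
        ring
  have hcsum : ∀ n, ∑ i ∈ Icc 1 n, c i = b (n + 1) - b 1 := by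
    intro n
    induction n with
    | zero => simp [show Finset.Icc 1 0 = ∅ from rfl]
    | succ n ih => rw [Finset.sum_Icc_succ_top (by omega : 1 ≤ n + 1), ih, hcdef]; ring
  have he : Tendsto (fun n => s n - L) atTop (𝓝 0) := by
    simpa using hs.sub (tendsto_const_nhds (x := L))
  have hW : Tendsto (fun n => (∑ i ∈ Icc 1 n, c i * (s i - L)) / b (n + 1)) atTop (𝓝 0) := by
    refine weighted_avg_zero c (fun i => s i - L) b (fun i hi => ?_) (fun n => ?_) hb1 hb he
    · exact sub_nonneg.2 (hmono i hi)
    · rw [hcsum n]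
      have := hb1 1 le_rfl; linarith
  have hinv : Tendsto (fun n => b 1 / b (n + 1)) atTop (𝓝 0) :=
    Tendsto.div_atTop tendsto_const_nhds (hb.comp (tendsto_add_atTop_nat 1))
  have hshift : Tendsto (fun n => (∑ i ∈ Icc 1 (n + 1), a i) / b (n + 1)) atTop (𝓝 0) := by
    have hkey : ∀ n, (∑ i ∈ Icc 1 (n + 1), a i) / b (n + 1)
        = s (n + 1) - (∑ i ∈ Icc 1 n, c i * (s i - L)) / b (n + 1)
          - L + L * (b 1 / b (n + 1)) := by
      intro n
      have hbne : b (n + 1) ≠ 0 := ne_of_gt (lt_of_lt_of_le one_pos (hb1 (n + 1) (by omega)))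
      rw [habel n]
      have hnum : ∑ i ∈ Icc 1 n, c i * s i
          = (∑ i ∈ Icc 1 n, c i * (s i - L)) + L * (b (n + 1) - b 1) := by
        rw [← hcsum n, Finset.mul_sum, ← Finset.sum_add_distrib]
        exact Finset.sum_congr rfl fun i _ => by ring
      rw [hnum]
      field_simp
      ring
    rw [tendsto_congr hkey]
    have h1 : Tendsto (fun n => s (n + 1)) atTop (𝓝 L) := hs.comp (tendsto_add_atTop_nat 1)
    have hfinal : Tendsto (fun n => s (n + 1)
        - (∑ i ∈ Icc 1 n, c i * (s i - L)) / b (n + 1) - L + L * (b 1 / b (n + 1)))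
        atTop (𝓝 (L - 0 - L + L * 0)) :=
      ((h1.sub hW).sub (tendsto_const_nhds (x := L))).add (hinv.const_mul L)
    simpa using hfinal
  have := hshift.comp (tendsto_sub_atTop_nat 1)
  refine this.congr' ?_
  filter_upwards [eventually_ge_atTop 1] with n hn
  simp only [Function.comp]
  congr 1 <;> rw [Nat.sub_add_cancel hn]


def den {Ω : Type*} (X : ℕ → Ω → ℕ) (u i : ℕ) (ω : Ω) : ℝ := ((max (visits X u i ω) 1 : ℕ) : ℝ)

def inc {Ω : Type*} (F : ℕ → ℝ) (U : ℕ → Ω → ℝ) (X : ℕ → Ω → ℕ) (u i : ℕ) (ω : Ω) : ℝ :=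
  ((if X i ω = u then (1:ℝ) else 0) * (resp F U X i ω - F u)) / den X u i ω

def NN {Ω : Type*} (F : ℕ → ℝ) (U : ℕ → Ω → ℝ) (X : ℕ → Ω → ℕ) (u n : ℕ) (ω : Ω) : ℝ :=
  ∑ i ∈ Finset.Icc 1 n, inc F U X u i ω

def qq {Ω : Type*} (X : ℕ → Ω → ℕ) (u i : ℕ) (ω : Ω) : ℝ :=
  (if X i ω = u then (1:ℝ) else 0) / (den X u i ω) ^ 2

def QQ {Ω : Type*} (X : ℕ → Ω → ℕ) (u n : ℕ) (ω : Ω) : ℝ :=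
  ∑ i ∈ Finset.Icc 1 n, qq X u i ω

section PW
variable {Ω : Type*} (F : ℕ → ℝ) (U : ℕ → Ω → ℝ) (X : ℕ → Ω → ℕ)

lemma visits_eq_sum (u n : ℕ) (ω : Ω) :
    visits X u n ω = ∑ i ∈ Finset.Icc 1 n, if X i ω = u then 1 else 0 :=
  Finset.card_filter _ _

lemma visits_succ (u n : ℕ) (ω : Ω) :
    visits X u (n + 1) ω = visits X u n ω + if X (n + 1) ω = u then 1 else 0 := by
  rw [visits_eq_sum, visits_eq_sum, Finset.sum_Icc_succ_top (by omega : 1 ≤ n + 1)]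

lemma den_ge_one (u i : ℕ) (ω : Ω) : (1:ℝ) ≤ den X u i ω := by
  unfold den; exact_mod_cast Nat.one_le_iff_ne_zero.2 (by positivity)

lemma den_pos (u i : ℕ) (ω : Ω) : (0:ℝ) < den X u i ω :=
  lt_of_lt_of_le one_pos (den_ge_one X u i ω)

variable {F} in
lemma abs_resp_sub_le (hFu0 : (0:ℝ) ≤ F u) (hFu1 : F u ≤ 1) (i : ℕ) (ω : Ω) :
    |resp F U X i ω - F u| ≤ 1 := by
  unfold resp; split_ifs <;> rw [abs_le] <;> constructor <;> linarith

variable {F} in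
lemma abs_inc_le (hFu0 : (0:ℝ) ≤ F u) (hFu1 : F u ≤ 1) (i : ℕ) (ω : Ω) :
    |inc F U X u i ω| ≤ 1 := by
  unfold inc
  rw [abs_div, abs_of_pos (den_pos X u i ω), div_le_one (den_pos X u i ω), abs_mul]
  calc |if X i ω = u then (1:ℝ) else 0| * |resp F U X i ω - F u|
      ≤ 1 * 1 := by
        refine mul_le_mul ?_ (abs_resp_sub_le U X hFu0 hFu1 i ω) (abs_nonneg _) zero_le_one
        split_ifs <;> simp
    _ = 1 := one_mul 1
    _ ≤ den X u i ω := den_ge_one X u i ω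

variable {F} in
lemma abs_NN_le (hFu0 : (0:ℝ) ≤ F u) (hFu1 : F u ≤ 1) (n : ℕ) (ω : Ω) :
    |NN F U X u n ω| ≤ n := by
  calc |NN F U X u n ω| ≤ ∑ i ∈ Finset.Icc 1 n, |inc F U X u i ω| :=
        Finset.abs_sum_le_sum_abs _ _
    _ ≤ ∑ _i ∈ Finset.Icc 1 n, (1:ℝ) :=
        Finset.sum_le_sum fun i _ => abs_inc_le U X hFu0 hFu1 i ω
    _ = ((Finset.Icc 1 n).card : ℝ) := by simp
    _ = n := by rw [Nat.card_Icc]; simp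

lemma qq_nonneg (u i : ℕ) (ω : Ω) : 0 ≤ qq X u i ω := by
  unfold qq; positivity

lemma qq_le_one (u i : ℕ) (ω : Ω) : qq X u i ω ≤ 1 := by
  unfold qq
  have hd := den_pos X u i ω
  rw [div_le_one (by positivity)]
  have h := den_ge_one X u i ω
  have : (1:ℝ) ≤ (den X u i ω) ^ 2 := by nlinarith
  split_ifs <;> linarith

variable {F} in
lemma sq_inc_le_qq (hFu0 : (0:ℝ) ≤ F u) (hFu1 : F u ≤ 1) (i : ℕ) (ω : Ω) :
    (inc F U X u i ω) ^ 2 ≤ qq X u i ω := by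
  unfold inc qq
  rw [div_pow]
  have hd := den_pos X u i ω
  by_cases h : X i ω = u
  · rw [if_pos h]
    gcongr
    nlinarith [abs_resp_sub_le U X hFu0 hFu1 i ω, abs_nonneg (resp F U X i ω - F u),
      sq_abs (resp F U X i ω - F u)]
  · rw [if_neg h]
    simp

lemma QQ_le_two (u : ℕ) (n : ℕ) (ω : Ω) :
    QQ X u n ω ≤ 2 - 2 / ((visits X u n ω : ℝ) + 1) := by
  induction n with
  | zero =>
      unfold QQ visits
      simp [show Finset.Icc 1 0 = ∅ from rfl]
  | succ n ih =>
      unfold QQ at ih ⊢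
      rw [Finset.sum_Icc_succ_top (by omega : 1 ≤ n + 1), visits_succ]
      by_cases h : X (n + 1) ω = u
      · rw [if_pos h]
        have hden : den X u (n + 1) ω = (visits X u n ω : ℝ) + 1 := by
          unfold den
          rw [visits_succ, if_pos h, max_eq_left (by omega)]
          push_cast; ring
        have hq : qq X u (n + 1) ω ≤ 1 / ((visits X u n ω : ℝ) + 1) ^ 2 := by
          unfold qq
          rw [if_pos h, hden]
        set V : ℝ := (visits X u n ω : ℝ) with hV
        have hV0 : 0 ≤ V := by positivity
        have h1 : (0:ℝ) < V + 1 := by linarith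
        have h2 : (0:ℝ) < V + 2 := by linarith
        have key : 1 / (V + 1) ^ 2 ≤ 2 / (V + 1) - 2 / (V + 2) := by
          rw [div_sub_div _ _ h1.ne' h2.ne', div_le_div_iff₀ (by positivity) (by positivity)]
          nlinarith
        push_cast
        have : ((visits X u n ω : ℝ) + 1 + 1) = V + 2 := by rw [hV]; ring
        rw [this]
        linarith
      · rw [if_neg h]
        have : qq X u (n + 1) ω = 0 := by
          unfold qq; rw [if_neg h, zero_div]
        rw [this, add_zero]
        simpa using ih

lemma QQ_le_two' (u : ℕ) (n : ℕ) (ω : Ω) : QQ X u n ω ≤ 2 := by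
  have h := QQ_le_two X u n ω
  have : 0 ≤ 2 / ((visits X u n ω : ℝ) + 1) := by positivity
  linarith

lemma QQ_nonneg (u n : ℕ) (ω : Ω) : 0 ≤ QQ X u n ω :=
  Finset.sum_nonneg fun i _ => qq_nonneg X u i ω

end PW

section MD
variable {Ω : Type*} (F : ℕ → ℝ) (U : ℕ → Ω → ℝ) (X : ℕ → Ω → ℕ)

lemma visits_mono (u : ℕ) (ω : Ω) : Monotone fun n => visits X u n ω := by
  intro a b hab
  exact Finset.card_le_card (Finset.filter_subset_filter _ (Finset.Icc_subset_Icc le_rfl hab))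

lemma mart_div (u n : ℕ) (ω : Ω) (hv : 1 ≤ visits X u n ω) :
    Mart F U X u n ω / (visits X u n ω : ℝ) = Fhat F U X u n ω - F u := by
  have hv' : (0:ℝ) < (visits X u n ω : ℝ) := by exact_mod_cast hv
  have hMart : Mart F U X u n ω
      = (∑ i ∈ Finset.Icc 1 n, if X i ω = u then resp F U X i ω else 0)
        - F u * (visits X u n ω : ℝ) := by
    unfold Mart
    have : ∀ i, (if X i ω = u then (1:ℝ) else 0) * (resp F U X i ω - F u)
        = (if X i ω = u then resp F U X i ω else 0) - F u * (if X i ω = u then (1:ℝ) else 0) := by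
      intro i; split_ifs <;> ring
    rw [Finset.sum_congr rfl fun i _ => this i, Finset.sum_sub_distrib, ← Finset.mul_sum,
      Finset.sum_boole]
    simp [visits]
  rw [hMart, Fhat, _root_.sub_div, mul_div_assoc, div_self hv'.ne', mul_one]

lemma fhat_tendsto (u : ℕ) (ω : Ω)
    (hvis : Tendsto (fun n => visits X u n ω) atTop atTop)
    (hNN : ∃ L, Tendsto (fun n => NN F U X u n ω) atTop (𝓝 L)) :
    Tendsto (fun n => Fhat F U X u n ω) atTop (𝓝 (F u)) := by
  obtain ⟨L, hL⟩ := hNN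
  have hmart : Tendsto (fun n => Mart F U X u n ω / den X u n ω) atTop (𝓝 0) := by
    refine kronecker (fun i => (if X i ω = u then (1:ℝ) else 0) * (resp F U X i ω - F u))
      (fun i => den X u i ω) (fun n _ => den_ge_one X u n ω) (fun n _ => ?_) ?_ L hL
    · show ((max (visits X u n ω) 1 : ℕ):ℝ) ≤ ((max (visits X u (n+1) ω) 1 : ℕ):ℝ)
      exact Nat.cast_le.2 (max_le_max (visits_mono X u ω (Nat.le_succ n)) le_rfl)
    · unfold den
      refine tendsto_natCast_atTop_atTop.comp (tendsto_atTop_mono (fun n => le_max_left _ _) hvis)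
  have hev : ∀ᶠ n in atTop, Mart F U X u n ω / den X u n ω = Fhat F U X u n ω - F u := by
    filter_upwards [hvis.eventually_ge_atTop 1] with n hn
    have : den X u n ω = (visits X u n ω : ℝ) := by unfold den; rw [max_eq_left hn]
    rw [this, mart_div F U X u n ω hn]
  have := hmart.congr' hev
  rw [← tendsto_sub_nhds_zero_iff]
  exact this

end MD
section Meas
variable {Ω : Type*} {F : ℕ → ℝ} {U : ℕ → Ω → ℝ} {X : ℕ → Ω → ℕ} {𝓂 : MeasurableSpace Ω}

lemma measResp {i : ℕ} (hU : Measurable[𝓂] (U i)) (hX : Measurable[𝓂] (X i)) :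
    Measurable[𝓂] (resp F U X i) := by
  have hset : MeasurableSet[𝓂] {ω | U i ω ≤ F (X i ω)} := by
    have : {ω | U i ω ≤ F (X i ω)} = ⋃ u : ℕ, (X i ⁻¹' {u}) ∩ (U i ⁻¹' Set.Iic (F u)) := by
      ext ω
      simp only [Set.mem_setOf_eq, Set.mem_iUnion, Set.mem_inter_iff, Set.mem_preimage,
        Set.mem_singleton_iff, Set.mem_Iic]
      exact ⟨fun h => ⟨X i ω, rfl, h⟩, fun ⟨u, hu, h⟩ => by rw [hu]; exact h⟩
    rw [this]
    exact MeasurableSet.iUnion fun u =>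
      (hX (measurableSet_singleton u)).inter (hU measurableSet_Iic)
  exact Measurable.ite hset measurable_const measurable_const

lemma measVisitsNat {u i : ℕ} (hX : ∀ j, 1 ≤ j → j ≤ i → Measurable[𝓂] (X j)) :
    Measurable[𝓂] (fun ω => visits X u i ω) := by
  have : (fun ω => visits X u i ω)
      = fun ω => ∑ j ∈ Finset.Icc 1 i, if X j ω = u then 1 else 0 := by
    funext ω; rw [visits_eq_sum]
  rw [this]
  refine Finset.measurable_sum _ fun j hj => ?_
  have hj' := Finset.mem_Icc.1 hj
  exact Measurable.ite (hX j hj'.1 hj'.2 (measurableSet_singleton u))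
    measurable_const measurable_const

lemma measDen {u i : ℕ} (hX : ∀ j, 1 ≤ j → j ≤ i → Measurable[𝓂] (X j)) :
    Measurable[𝓂] (den X u i) :=
  (measurable_from_top (f := fun k : ℕ => ((max k 1 : ℕ) : ℝ))).comp (measVisitsNat hX)

lemma measInc {u i : ℕ} (hU : Measurable[𝓂] (U i))
    (hX : ∀ j, 1 ≤ j → j ≤ i → Measurable[𝓂] (X j)) (hi : 1 ≤ i) :
    Measurable[𝓂] (inc F U X u i) := by
  refine Measurable.div ?_ (measDen hX)
  exact ((Measurable.ite ((hX i hi le_rfl) (measurableSet_singleton u)) measurable_const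
    measurable_const).mul ((measResp hU (hX i hi le_rfl)).sub measurable_const))

lemma measNN {u n : ℕ} (hU : ∀ j, 1 ≤ j → j ≤ n → Measurable[𝓂] (U j))
    (hX : ∀ j, 1 ≤ j → j ≤ n → Measurable[𝓂] (X j)) :
    Measurable[𝓂] (NN F U X u n) := by
  refine Finset.measurable_sum _ fun i hi => ?_
  have hi' := Finset.mem_Icc.1 hi
  exact measInc (hU i hi'.1 hi'.2) (fun j h1 h2 => hX j h1 (h2.trans hi'.2)) hi'.1

lemma measQq {u i : ℕ} (hX : ∀ j, 1 ≤ j → j ≤ i → Measurable[𝓂] (X j)) (hi : 1 ≤ i) :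
    Measurable[𝓂] (qq X u i) := by
  refine Measurable.div ?_ ((measDen hX).pow measurable_const)
  exact Measurable.ite ((hX i hi le_rfl) (measurableSet_singleton u)) measurable_const
    measurable_const

lemma measQQ {u n : ℕ} (hX : ∀ j, 1 ≤ j → j ≤ n → Measurable[𝓂] (X j)) :
    Measurable[𝓂] (QQ X u n) := by
  refine Finset.measurable_sum _ fun i hi => ?_
  have hi' := Finset.mem_Icc.1 hi
  exact measQq (fun j h1 h2 => hX j h1 (h2.trans hi'.2)) hi'.1

end Meas

lemma measFhatG {Ω : Type*} {F : ℕ → ℝ} {U : ℕ → Ω → ℝ} {X : ℕ → Ω → ℕ}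
    {𝓂 : MeasurableSpace Ω} {u i : ℕ}
    (hU : ∀ j, 1 ≤ j → j ≤ i → Measurable[𝓂] (U j))
    (hX : ∀ j, 1 ≤ j → j ≤ i → Measurable[𝓂] (X j)) :
    Measurable[𝓂] (fun ω => Fhat F U X u i ω) := by
  refine Measurable.div ?_
    ((measurable_from_top (f := fun k : ℕ => (k : ℝ))).comp (measVisitsNat hX))
  refine Finset.measurable_sum _ fun j hj => ?_
  have hj' := Finset.mem_Icc.1 hj
  exact Measurable.ite ((hX j hj'.1 hj'.2) (measurableSet_singleton u))
    (measResp (hU j hj'.1 hj'.2) (hX j hj'.1 hj'.2)) measurable_const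

lemma measU {Ω : Type*} [mΩ : MeasurableSpace Ω] {U : ℕ → Ω → ℝ}
    (hU : ∀ i, Measurable (U i)) {i n : ℕ} (hi : 1 ≤ i) (hin : i ≤ n) :
    Measurable[natFilt U hU n] (U i) := by
  refine measurable_iff_comap_le.2 ?_
  exact le_iSup₂_of_le i (Finset.mem_Icc.2 ⟨hi, hin⟩) le_rfl

lemma measX {Ω : Type*} [mΩ : MeasurableSpace Ω] {U : ℕ → Ω → ℝ}
    (hU : ∀ i, Measurable (U i)) {F : ℕ → ℝ} {X : ℕ → Ω → ℕ}
    {m : ℕ} {p Δ₁ Δ₂ : ℝ} {x₀ : ℕ}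
    (hrule : intervalRule m p Δ₁ Δ₂ F U X) (hX1 : ∀ ω, X 1 ω = x₀) :
    ∀ n, Measurable[natFilt U hU n] (X (n + 1)) := by
  intro n
  induction n using Nat.strong_induction_on with
  | _ n ih =>
    rcases Nat.eq_zero_or_pos n with hn | hn
    · subst hn
      have : X 1 = fun _ => x₀ := funext hX1
      rw [this]
      exact measurable_const
    · have hXle : ∀ j, 1 ≤ j → j ≤ n → Measurable[natFilt U hU n] (X j) := by
        intro j hj hjn
        have := ih (j - 1) (by omega)
        rw [Nat.sub_add_cancel hj] at this
        exact this.mono ((natFilt U hU).mono (by omega)) le_rfl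
      have measG : Measurable[natFilt U hU n] (fun ω => Fhat F U X (X n ω) n ω) := by
        intro s hs
        have : (fun ω => Fhat F U X (X n ω) n ω) ⁻¹' s
            = ⋃ u : ℕ, (X n ⁻¹' {u}) ∩ ((fun ω => Fhat F U X u n ω) ⁻¹' s) := by
          ext ω
          simp only [Set.mem_preimage, Set.mem_iUnion, Set.mem_inter_iff,
            Set.mem_singleton_iff]
          exact ⟨fun h => ⟨X n ω, rfl, h⟩, fun ⟨u, hu, h⟩ => by rw [hu]; exact h⟩
        rw [this]
        exact MeasurableSet.iUnion fun u =>
          ((hXle n hn le_rfl) (measurableSet_singleton u)).inter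
            ((measFhatG (fun j h1 h2 => measU hU h1 h2) hXle) hs)
      have hXsucc : X (n + 1) = fun ω =>
          if Fhat F U X (X n ω) n ω ≤ p - Δ₁ then min (X n ω + 1) m
          else if p + Δ₂ ≤ Fhat F U X (X n ω) n ω then max (X n ω - 1) 1
          else X n ω := by
        funext ω
        obtain ⟨h1, h2, h3⟩ := hrule n hn ω
        by_cases hA : Fhat F U X (X n ω) n ω ≤ p - Δ₁
        · rw [if_pos hA]; exact h2 hA
        · rw [if_neg hA]
          by_cases hB : p + Δ₂ ≤ Fhat F U X (X n ω) n ω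
          · rw [if_pos hB]; exact h3 hB
          · rw [if_neg hB]
            push_neg at hA hB
            exact h1 hA hB
      rw [hXsucc]
      refine Measurable.ite (measurableSet_le measG measurable_const) ?_ ?_
      · exact (measurable_from_top (f := fun k : ℕ => min (k + 1) m)).comp (hXle n hn le_rfl)
      · refine Measurable.ite (measurableSet_le measurable_const measG) ?_ ?_
        · exact (measurable_from_top (f := fun k : ℕ => max (k - 1) 1)).comp (hXle n hn le_rfl)
        · exact hXle n hn le_rfl
section Prob
variable {Ω : Type*} [mΩ : MeasurableSpace Ω] (P : Measure Ω) [IsProbabilityMeasure P]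
  (F : ℕ → ℝ) (U : ℕ → Ω → ℝ) (X : ℕ → Ω → ℕ)

lemma integrable_of_abs_le {f : Ω → ℝ} (hf : Measurable f) (C : ℝ) (h : ∀ ω, |f ω| ≤ C) :
    Integrable f P :=
  ⟨hf.aestronglyMeasurable, HasFiniteIntegral.of_bounded (C := C)
    (ae_of_all _ fun ω => by rw [Real.norm_eq_abs]; exact h ω)⟩

lemma ae_NN_conv (hUmeas : ∀ i, Measurable (U i))
    (hUindep : iIndepFun U P)
    (hUdist : ∀ i, Measure.map (U i) P = volume.restrict (Set.Icc (0:ℝ) 1))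
    (hXmeas : ∀ i, Measurable (X i))
    (hXad : ∀ n, Measurable[natFilt U hUmeas n] (X (n + 1)))
    (u : ℕ) (hFu0 : (0:ℝ) ≤ F u) (hFu1 : F u ≤ 1) :
    ∀ᵐ ω ∂P, ∃ c, Tendsto (fun n => NN F U X u n ω) atTop (𝓝 c) := by
  set ℱ := natFilt U hUmeas with hℱ
  -- filtration-measurability facts
  have hUle : ∀ j n, 1 ≤ j → j ≤ n → Measurable[ℱ n] (U j) := by
    intro j n h1 h2
    exact measurable_iff_comap_le.2 (le_iSup₂_of_le j (Finset.mem_Icc.2 ⟨h1, h2⟩) le_rfl)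
  have hXle : ∀ j n, 1 ≤ j → j ≤ n + 1 → Measurable[ℱ n] (X j) := by
    intro j n h1 h2
    have := hXad (j - 1)
    rw [Nat.sub_add_cancel h1] at this
    exact this.mono (ℱ.mono (by omega)) le_rfl
  have hNNF : ∀ n, Measurable[ℱ n] (NN F U X u n) := fun n =>
    measNN (fun j h1 h2 => hUle j n h1 h2) (fun j h1 h2 => hXle j n h1 (by omega))
  -- ambient measurability
  have hXa : ∀ j, 1 ≤ j → j ≤ j → Measurable (X j) := fun j _ _ => hXmeas j
  have hInca : ∀ i, 1 ≤ i → Measurable (inc F U X u i) := fun i hi =>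
    measInc (hUmeas i) (fun j _ _ => hXmeas j) hi
  have hNNa : ∀ n, Measurable (NN F U X u n) := fun n =>
    measNN (fun j _ _ => hUmeas j) (fun j _ _ => hXmeas j)
  have hqqa : ∀ i, 1 ≤ i → Measurable (qq X u i) := fun i hi =>
    measQq (fun j _ _ => hXmeas j) hi
  have hQQa : ∀ n, Measurable (QQ X u n) := fun n => measQQ (fun j _ _ => hXmeas j)
  -- integrability
  have hIncInt : ∀ i, 1 ≤ i → Integrable (inc F U X u i) P := fun i hi =>
    integrable_of_abs_le P (hInca i hi) 1 (abs_inc_le U X hFu0 hFu1 i)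
  have hNNint : ∀ n, Integrable (NN F U X u n) P := fun n =>
    integrable_of_abs_le P (hNNa n) n (abs_NN_le U X hFu0 hFu1 n)
  have hqqInt : ∀ i, 1 ≤ i → Integrable (qq X u i) P := fun i hi =>
    integrable_of_abs_le P (hqqa i hi) 1 (fun ω => by
      rw [abs_of_nonneg (qq_nonneg X u i ω)]; exact qq_le_one X u i ω)
  have hQQint : ∀ n, Integrable (QQ X u n) P := fun n =>
    integrable_of_abs_le P (hQQa n) 2 (fun ω => by
      rw [abs_of_nonneg (QQ_nonneg X u n ω)]; exact QQ_le_two' X u n ω)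
  -- conditional expectation of the increment is zero
  have hcond0 : ∀ n, P[inc F U X u (n + 1)|ℱ n] =ᵐ[P] 0 := by
    intro n
    set c : Ω → ℝ := fun ω => (if X (n + 1) ω = u then (1:ℝ) else 0) / den X u (n + 1) ω with hc
    set g : Ω → ℝ := fun ω => (if U (n + 1) ω ≤ F u then (1:ℝ) else 0) - F u with hg
    have hdecomp : inc F U X u (n + 1) = c * g := by
      funext ω
      show ((if X (n + 1) ω = u then (1:ℝ) else 0) * (resp F U X (n + 1) ω - F u))
            / den X u (n + 1) ω
          = ((if X (n + 1) ω = u then (1:ℝ) else 0) / den X u (n + 1) ω)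
            * ((if U (n + 1) ω ≤ F u then (1:ℝ) else 0) - F u)
      unfold resp
      by_cases h : X (n + 1) ω = u
      · rw [h, if_pos rfl]
        ring
      · rw [if_neg h]
        simp
    have hgmeas : Measurable g :=
      (Measurable.ite ((hUmeas (n + 1)) measurableSet_Iic) measurable_const
        measurable_const).sub measurable_const
    have hgbd : ∀ ω, |g ω| ≤ 1 := by
      intro ω; rw [hg]; simp only; split_ifs <;> rw [abs_le] <;> constructor <;> linarith
    have hgint : Integrable g P := integrable_of_abs_le P hgmeas 1 hgbd
    have hgsm : StronglyMeasurable[MeasurableSpace.comap (U (n + 1)) inferInstance] g := by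
      have hU' : Measurable[MeasurableSpace.comap (U (n + 1)) inferInstance] (U (n + 1)) :=
        measurable_iff_comap_le.2 le_rfl
      exact ((Measurable.ite (hU' measurableSet_Iic) measurable_const
        measurable_const).sub measurable_const).stronglyMeasurable
    have hindep : Indep (MeasurableSpace.comap (U (n + 1)) inferInstance) (ℱ n) P := by
      have h_le : ∀ i, MeasurableSpace.comap (U i) inferInstance ≤ mΩ := fun i =>
        (hUmeas i).comap_le
      have hbig := indep_biSup_compl h_le hUindep {n + 1}
      rw [_root_.iSup_singleton] at hbig
      refine indep_of_indep_of_le_right hbig ?_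
      refine iSup₂_le fun i hi => le_iSup₂_of_le i ?_ le_rfl
      have := Finset.mem_Icc.1 hi
      simp only [Set.mem_compl_iff, Set.mem_singleton_iff]
      omega
    have hmean : ∫ ω, g ω ∂P = 0 := by
      have hg'meas : Measurable (fun x : ℝ => (if x ≤ F u then (1:ℝ) else 0) - F u) :=
        (Measurable.ite measurableSet_Iic measurable_const measurable_const).sub
          measurable_const
      have hmap : ∫ ω, g ω ∂P
          = ∫ x, ((if x ≤ F u then (1:ℝ) else 0) - F u) ∂(Measure.map (U (n + 1)) P) :=
        (integral_map (hUmeas (n + 1)).aemeasurable hg'meas.aestronglyMeasurable).symm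
      rw [hmap, hUdist (n + 1)]
      have hfin : IsFiniteMeasure (volume.restrict (Set.Icc (0:ℝ) 1)) := by
        constructor
        rw [Measure.restrict_apply_univ, Real.volume_Icc]
        simp
      have hindic : (fun x : ℝ => (if x ≤ F u then (1:ℝ) else 0))
          = Set.indicator (Set.Iic (F u)) (fun _ => (1:ℝ)) := by
        funext x; rw [Set.indicator_apply]; simp [Set.mem_Iic]
      have hint1 : Integrable (fun x : ℝ => (if x ≤ F u then (1:ℝ) else 0))
          (volume.restrict (Set.Icc (0:ℝ) 1)) := by
        rw [hindic]
        exact (integrable_const (1:ℝ)).indicator measurableSet_Iic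
      rw [integral_sub hint1 (integrable_const _), hindic,
        integral_indicator_const (1:ℝ) measurableSet_Iic, integral_const]
      rw [measureReal_def, measureReal_def, Measure.restrict_apply measurableSet_Iic, Measure.restrict_apply_univ]
      have hseteq : Set.Iic (F u) ∩ Set.Icc (0:ℝ) 1 = Set.Icc (0:ℝ) (F u) := by
        ext x
        simp only [Set.mem_inter_iff, Set.mem_Iic, Set.mem_Icc]
        constructor
        · rintro ⟨h1, h2, _⟩; exact ⟨h2, h1⟩
        · rintro ⟨h1, h2⟩; exact ⟨h2, h1, h2.trans hFu1⟩
      rw [hseteq, Real.volume_Icc, Real.volume_Icc]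
      rw [ENNReal.toReal_ofReal (by linarith), ENNReal.toReal_ofReal (by linarith)]
      simp
    have hcmeas : StronglyMeasurable[ℱ n] c := by
      refine Measurable.stronglyMeasurable ?_
      refine Measurable.div ?_ (measDen (fun j h1 h2 => hXle j n h1 h2))
      exact Measurable.ite ((hXle (n + 1) n (by omega) le_rfl) (measurableSet_singleton u))
        measurable_const measurable_const
    have hmul : P[c * g|ℱ n] =ᵐ[P] c * P[g|ℱ n] := by
      refine condExp_mul_of_stronglyMeasurable_left hcmeas ?_ hgint
      rw [← hdecomp]
      exact hIncInt (n + 1) (by omega)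
    have hcge : P[g|ℱ n] =ᵐ[P] fun _ => 0 := by
      have := condExp_indep_eq (m := mΩ) ((hUmeas (n + 1)).comap_le) (ℱ.le n) hgsm hindep
      rw [hmean] at this
      exact this
    rw [hdecomp]
    refine hmul.trans ?_
    filter_upwards [hcge] with ω hω
    show c ω * (P[g|ℱ n]) ω = 0
    rw [hω]
    exact mul_zero _
  -- martingale
  have hNNsucc : ∀ n, NN F U X u (n + 1) = NN F U X u n + inc F U X u (n + 1) := by
    intro n
    funext ω
    exact Finset.sum_Icc_succ_top (by omega : 1 ≤ n + 1) _
  have hmart : Martingale (fun n => NN F U X u n) ℱ P := by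
    refine martingale_nat (fun n => (hNNF n).stronglyMeasurable) (fun n => hNNint n) ?_
    intro n
    have h1 : P[NN F U X u (n + 1)|ℱ n]
        =ᵐ[P] P[NN F U X u n|ℱ n] + P[inc F U X u (n + 1)|ℱ n] := by
      rw [hNNsucc n]
      exact condExp_add (hNNint n) (hIncInt (n + 1) (by omega)) _
    have h2 : P[NN F U X u n|ℱ n] = NN F U X u n :=
      condExp_of_stronglyMeasurable (ℱ.le n) (hNNF n).stronglyMeasurable (hNNint n)
    refine EventuallyEq.symm (h1.trans ?_)
    filter_upwards [hcond0 n] with ω hω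
    show (P[NN F U X u n|ℱ n]) ω + (P[inc F U X u (n + 1)|ℱ n]) ω = NN F U X u n ω
    rw [h2, hω]
    show NN F U X u n ω + 0 = NN F U X u n ω
    exact add_zero _
  -- L² bound
  have hNN2int : ∀ n, Integrable (fun ω => (NN F U X u n ω) ^ 2) P := by
    intro n
    refine integrable_of_abs_le P ((hNNa n).pow measurable_const) ((n:ℝ) ^ 2) fun ω => ?_
    rw [abs_of_nonneg (sq_nonneg _), ← sq_abs]
    have h := abs_NN_le U X hFu0 hFu1 n ω
    have h0 : (0:ℝ) ≤ |NN F U X u n ω| := abs_nonneg _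
    nlinarith
  have hInc2int : ∀ n, Integrable (fun ω => (inc F U X u (n + 1) ω) ^ 2) P := by
    intro n
    refine integrable_of_abs_le P ((hInca (n + 1) (by omega)).pow measurable_const) 1 fun ω => ?_
    rw [abs_of_nonneg (sq_nonneg _), ← sq_abs]
    have h := abs_inc_le U X hFu0 hFu1 (n + 1) ω
    have h0 : (0:ℝ) ≤ |inc F U X u (n + 1) ω| := abs_nonneg _
    nlinarith
  have hprod_int : ∀ n, Integrable (fun ω => NN F U X u n ω * inc F U X u (n + 1) ω) P := by
    intro n
    refine integrable_of_abs_le P ((hNNa n).mul (hInca (n + 1) (by omega))) n fun ω => ?_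
    rw [abs_mul]
    calc |NN F U X u n ω| * |inc F U X u (n + 1) ω| ≤ (n:ℝ) * 1 :=
          mul_le_mul (abs_NN_le U X hFu0 hFu1 n ω) (abs_inc_le U X hFu0 hFu1 (n + 1) ω)
            (abs_nonneg _) (by positivity)
      _ = n := mul_one _
  have hcross : ∀ n, ∫ ω, NN F U X u n ω * inc F U X u (n + 1) ω ∂P = 0 := by
    intro n
    have hpull : P[(NN F U X u n) * (inc F U X u (n + 1))|ℱ n]
        =ᵐ[P] (NN F U X u n) * P[inc F U X u (n + 1)|ℱ n] :=
      condExp_mul_of_stronglyMeasurable_left (hNNF n).stronglyMeasurable (hprod_int n)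
        (hIncInt (n + 1) (by omega))
    have hzero : (NN F U X u n) * P[inc F U X u (n + 1)|ℱ n] =ᵐ[P] 0 := by
      filter_upwards [hcond0 n] with ω hω
      show NN F U X u n ω * (P[inc F U X u (n + 1)|ℱ n]) ω = 0
      rw [hω]
      exact mul_zero _
    calc ∫ ω, NN F U X u n ω * inc F U X u (n + 1) ω ∂P
        = ∫ ω, (P[(NN F U X u n) * (inc F U X u (n + 1))|ℱ n]) ω ∂P :=
          (integral_condExp (ℱ.le n)).symm
      _ = ∫ _ω, (0:ℝ) ∂P := integral_congr_ae (hpull.trans hzero)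
      _ = 0 := integral_zero _ _
  have hQQsucc : ∀ n, QQ X u (n + 1) = QQ X u n + qq X u (n + 1) := by
    intro n
    funext ω
    exact Finset.sum_Icc_succ_top (by omega : 1 ≤ n + 1) _
  have hstep : ∀ n, ∫ ω, (NN F U X u (n + 1) ω) ^ 2 ∂P
      ≤ ∫ ω, (NN F U X u n ω) ^ 2 ∂P + ∫ ω, qq X u (n + 1) ω ∂P := by
    intro n
    have hexp : (fun ω => (NN F U X u (n + 1) ω) ^ 2)
        = fun ω => ((NN F U X u n ω) ^ 2 + 2 * (NN F U X u n ω * inc F U X u (n + 1) ω))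
          + (inc F U X u (n + 1) ω) ^ 2 := by
      funext ω
      rw [hNNsucc n]
      show (NN F U X u n ω + inc F U X u (n + 1) ω) ^ 2 = _
      ring
    have hi1 : Integrable (fun ω => NN F U X u n ω ^ 2
        + 2 * (NN F U X u n ω * inc F U X u (n + 1) ω)) P :=
      (hNN2int n).add ((hprod_int n).const_mul 2)
    rw [hexp, integral_add hi1 (hInc2int n),
      integral_add (hNN2int n) ((hprod_int n).const_mul 2)]
    have h1 : ∫ ω, 2 * (NN F U X u n ω * inc F U X u (n + 1) ω) ∂P = 0 := by
      rw [integral_const_mul, hcross n]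
      exact mul_zero 2
    have h2 : ∫ ω, (inc F U X u (n + 1) ω) ^ 2 ∂P ≤ ∫ ω, qq X u (n + 1) ω ∂P :=
      integral_mono (hInc2int n) (hqqInt (n + 1) (by omega))
        (fun ω => sq_inc_le_qq U X hFu0 hFu1 (n + 1) ω)
    linarith
  have hL2Q : ∀ n, ∫ ω, (NN F U X u n ω) ^ 2 ∂P ≤ ∫ ω, QQ X u n ω ∂P := by
    intro n
    induction n with
    | zero =>
        have h1 : (fun ω => (NN F U X u 0 ω) ^ 2) = fun _ => (0:ℝ) := by
          funext ω
          show (∑ i ∈ Finset.Icc 1 0, inc F U X u i ω) ^ 2 = 0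
          rw [show Finset.Icc 1 0 = (∅ : Finset ℕ) from rfl]
          simp
        have h2 : (fun ω => QQ X u 0 ω) = fun _ => (0:ℝ) := by
          funext ω
          show ∑ i ∈ Finset.Icc 1 0, qq X u i ω = 0
          rw [show Finset.Icc 1 0 = (∅ : Finset ℕ) from rfl]
          simp
        rw [h1, h2]
    | succ n ih =>
        have h3 : ∫ ω, QQ X u (n + 1) ω ∂P = ∫ ω, QQ X u n ω ∂P + ∫ ω, qq X u (n + 1) ω ∂P := by
          rw [hQQsucc n]
          exact integral_add (hQQint n) (hqqInt (n + 1) (by omega))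
        have := hstep n
        linarith
  have hL2 : ∀ n, ∫ ω, (NN F U X u n ω) ^ 2 ∂P ≤ 2 := by
    intro n
    refine (hL2Q n).trans ?_
    calc ∫ ω, QQ X u n ω ∂P ≤ ∫ _ω, (2:ℝ) ∂P :=
          integral_mono (hQQint n) (integrable_const 2) (fun ω => QQ_le_two' X u n ω)
      _ = 2 := by simp
  have habs3 : ∀ n, ∫ ω, |NN F U X u n ω| ∂P ≤ 3 := by
    intro n
    have hptw : ∀ ω, |NN F U X u n ω| ≤ 1 + (NN F U X u n ω) ^ 2 := by
      intro ω
      nlinarith [sq_nonneg (|NN F U X u n ω| - 1), sq_abs (NN F U X u n ω),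
        abs_nonneg (NN F U X u n ω)]
    calc ∫ ω, |NN F U X u n ω| ∂P ≤ ∫ ω, (1 + (NN F U X u n ω) ^ 2) ∂P :=
          integral_mono (hNNint n).abs ((integrable_const 1).add (hNN2int n)) hptw
      _ = 1 + ∫ ω, (NN F U X u n ω) ^ 2 ∂P := by
          rw [integral_add (integrable_const 1) (hNN2int n)]
          simp
      _ ≤ 3 := by linarith [hL2 n]
  have hbdd : ∀ n, eLpNorm (NN F U X u n) 1 P ≤ ((3:ℝ≥0) : ℝ≥0∞) := by
    intro n
    rw [eLpNorm_one_eq_lintegral_enorm, ← ofReal_integral_norm_eq_lintegral_enorm (hNNint n)]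
    calc ENNReal.ofReal (∫ ω, ‖NN F U X u n ω‖ ∂P) ≤ ENNReal.ofReal 3 :=
          ENNReal.ofReal_le_ofReal (by simpa [Real.norm_eq_abs] using habs3 n)
      _ ≤ ((3:ℝ≥0) : ℝ≥0∞) := by norm_num
  exact hmart.submartingale.exists_ae_tendsto_of_bdd hbdd

end Prob

lemma endgame {Ω : Type*} (m : ℕ) (F : ℕ → ℝ) (U : ℕ → Ω → ℝ) (X : ℕ → Ω → ℕ)
    (hFmono : StrictMonoOn F (Set.Icc 1 m)) (p Δ₁ Δ₂ : ℝ)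
    (hrule : intervalRule m p Δ₁ Δ₂ F U X)
    (hXrange : ∀ i, 1 ≤ i → ∀ ω, X i ω ∈ Set.Icc 1 m)
    (ustar : ℕ) (hustar : ustar ∈ Set.Icc 1 m)
    (hin : F ustar ∈ Set.Ioo (p - Δ₁) (p + Δ₂))
    (huniq : ∀ u ∈ Set.Icc 1 m, F u ∈ Set.Icc (p - Δ₁) (p + Δ₂) → u = ustar)
    (ω : Ω)
    (hconv : ∀ u, u ∈ Finset.Icc 1 m → Tendsto (fun n => visits X u n ω) atTop atTop →
        Tendsto (fun n => Fhat F U X u n ω) atTop (𝓝 (F u))) :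
    ∃ N, ∀ n, N ≤ n → X n ω = ustar := by
  classical
  have hu1 : 1 ≤ ustar := hustar.1
  have hum : ustar ≤ m := hustar.2
  -- F comparisons
  have hbelow : ∀ u, u ∈ Finset.Icc 1 m → u < ustar → F u < p - Δ₁ := by
    intro u hu hlt
    have hu' : u ∈ Set.Icc 1 m := by
      have := Finset.mem_Icc.1 hu; exact ⟨this.1, this.2⟩
    have h1 : F u < F ustar := hFmono hu' hustar hlt
    by_contra h
    push_neg at h
    have : u = ustar := huniq u hu' ⟨h, le_of_lt (h1.trans hin.2)⟩
    omega
  have habove : ∀ u, u ∈ Finset.Icc 1 m → ustar < u → p + Δ₂ < F u := by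
    intro u hu hgt
    have hu' : u ∈ Set.Icc 1 m := by
      have := Finset.mem_Icc.1 hu; exact ⟨this.1, this.2⟩
    have h1 : F ustar < F u := hFmono hustar hu' hgt
    by_contra h
    push_neg at h
    have : u = ustar := huniq u hu' ⟨le_of_lt (lt_of_lt_of_le hin.1 (le_of_lt h1)), h⟩
    omega
  -- dichotomy
  set good : ℕ → Prop := fun u => Tendsto (fun n => visits X u n ω) atTop atTop with hgooddef
  have hdicho : ∀ u, ¬ good u → ∃ N, ∀ n, N ≤ n → X n ω ≠ u := by
    intro u hng
    by_contra h
    push_neg at h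
    refine hng (tendsto_atTop_atTop_of_monotone (visits_mono X u ω) ?_)
    intro k
    induction k with
    | zero => exact ⟨0, by omega⟩
    | succ k ih =>
        obtain ⟨n, hn⟩ := ih
        obtain ⟨n', hn', hXn'⟩ := h (n + 1)
        have hsucc := visits_succ X u (n' - 1) ω
        rw [Nat.sub_add_cancel (by omega : 1 ≤ n')] at hsucc
        rw [if_pos hXn'] at hsucc
        have hmono := visits_mono X u ω (show n ≤ n' - 1 by omega)
        exact ⟨n', by simp only at hmono ⊢; omega⟩
  -- the big eventual statement
  have hbig : ∀ᶠ n in atTop, ∀ u ∈ Finset.Icc 1 m,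
      ((good u → 1 ≤ n → X n ω = u →
        ((u < ustar → X (n + 1) ω = u + 1) ∧ (ustar < u → X (n + 1) ω = u - 1) ∧
          (u = ustar → X (n + 1) ω = u))) ∧ (¬ good u → X n ω ≠ u)) := by
    rw [eventually_all_finset]
    intro u hu
    by_cases hg : good u
    · have hFconv := hconv u hu hg
      have humem := Finset.mem_Icc.1 hu
      rcases lt_trichotomy u ustar with hlt | heq | hgt
      · have hev : ∀ᶠ n in atTop, Fhat F U X u n ω < p - Δ₁ :=
          hFconv.eventually_lt_const (hbelow u hu hlt)
        filter_upwards [hev] with n hn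
        refine ⟨fun _ hn1 hXn => ⟨fun _ => ?_, fun h' => by omega, fun h' => by omega⟩,
          fun hng => absurd hg hng⟩
        have h2 := (hrule n hn1 ω).2.1
        rw [hXn] at h2
        rw [h2 (le_of_lt hn), min_eq_left (by omega)]
      · have hev1 : ∀ᶠ n in atTop, p - Δ₁ < Fhat F U X u n ω := by
          refine hFconv.eventually_const_lt ?_
          rw [heq]; exact hin.1
        have hev2 : ∀ᶠ n in atTop, Fhat F U X u n ω < p + Δ₂ := by
          refine hFconv.eventually_lt_const ?_
          rw [heq]; exact hin.2
        filter_upwards [hev1, hev2] with n h1 h2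
        refine ⟨fun _ hn1 hXn => ⟨fun h' => by omega, fun h' => by omega, fun _ => ?_⟩,
          fun hng => absurd hg hng⟩
        have h3 := (hrule n hn1 ω).1
        rw [hXn] at h3
        rw [h3 h1 h2]
      · have hev : ∀ᶠ n in atTop, p + Δ₂ < Fhat F U X u n ω :=
          hFconv.eventually_const_lt (habove u hu hgt)
        filter_upwards [hev] with n hn
        refine ⟨fun _ hn1 hXn => ⟨fun h' => by omega, fun _ => ?_, fun h' => by omega⟩,
          fun hng => absurd hg hng⟩
        have h2 := (hrule n hn1 ω).2.2
        rw [hXn] at h2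
        rw [h2 (le_of_lt hn), max_eq_left (by omega)]
    · obtain ⟨N, hN⟩ := hdicho u hg
      filter_upwards [eventually_ge_atTop N] with n hn
      exact ⟨fun hg' => absurd hg' hg, fun _ => hN n hn⟩
  obtain ⟨N₀, hN₀⟩ := eventually_atTop.1 hbig
  set N : ℕ := max N₀ 1 with hN
  have hQ : ∀ n, N ≤ n → ∀ u ∈ Finset.Icc 1 m,
      ((good u → X n ω = u →
        ((u < ustar → X (n + 1) ω = u + 1) ∧ (ustar < u → X (n + 1) ω = u - 1) ∧
          (u = ustar → X (n + 1) ω = u))) ∧ (¬ good u → X n ω ≠ u)) := by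
    intro n hn u hu
    have h := hN₀ n (by omega) u hu
    exact ⟨fun hg hXn => h.1 hg (by omega) hXn, h.2⟩
  have hXmem : ∀ n, N ≤ n → X n ω ∈ Finset.Icc 1 m := by
    intro n hn
    have := hXrange n (by omega) ω
    exact Finset.mem_Icc.2 ⟨this.1, this.2⟩
  -- each visited level after N is good
  have hgoodlevel : ∀ n, N ≤ n → good (X n ω) := by
    intro n hn
    by_contra hng
    exact (hQ n hn (X n ω) (hXmem n hn)).2 hng rfl
  -- ustar is good
  have hustarF : ustar ∈ Finset.Icc 1 m := Finset.mem_Icc.2 ⟨hu1, hum⟩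
  have hgoodstar : good ustar := by
    by_contra hng
    have hne : ∀ n, N ≤ n → X n ω ≠ ustar := by
      intro n hn
      exact (hQ n hn ustar hustarF).2 hng
    have hup : ∀ n, N ≤ n → X n ω < ustar → X (n + 1) ω = X n ω + 1 := fun n hn h =>
      ((hQ n hn (X n ω) (hXmem n hn)).1 (hgoodlevel n hn) rfl).1 h
    have hdown : ∀ n, N ≤ n → ustar < X n ω → X (n + 1) ω = X n ω - 1 := fun n hn h =>
      ((hQ n hn (X n ω) (hXmem n hn)).1 (hgoodlevel n hn) rfl).2.1 h
    rcases lt_trichotomy (X N ω) ustar with hlt | heq | hgt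
    · have hind : ∀ k, X (N + k) ω = X N ω + k ∧ X (N + k) ω < ustar := by
        intro k
        induction k with
        | zero => exact ⟨rfl, hlt⟩
        | succ k ih =>
            have h1 := hup (N + k) (by omega) ih.2
            have h2 : X (N + (k + 1)) ω = X N ω + (k + 1) := by
              rw [show N + (k + 1) = (N + k) + 1 from rfl, h1, ih.1]
              omega
            have h3 : X (N + (k + 1)) ω ≠ ustar := hne _ (by omega)
            have h4 : X (N + (k + 1)) ω ≤ ustar := by
              rw [show N + (k + 1) = (N + k) + 1 from rfl, h1]
              omega
            exact ⟨h2, by omega⟩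
      have ha := (hind ustar).1
      have hb := (hind ustar).2
      omega
    · exact absurd heq (hne N le_rfl)
    · have hind : ∀ k, X (N + k) ω = X N ω - k ∧ ustar < X (N + k) ω := by
        intro k
        induction k with
        | zero => exact ⟨rfl, hgt⟩
        | succ k ih =>
            have h1 := hdown (N + k) (by omega) ih.2
            have h2 : X (N + (k + 1)) ω = X N ω - (k + 1) := by
              rw [show N + (k + 1) = (N + k) + 1 from rfl, h1]
              omega
            have h3 : X (N + (k + 1)) ω ≠ ustar := hne _ (by omega)
            have h4 : ustar ≤ X (N + (k + 1)) ω := by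
              rw [show N + (k + 1) = (N + k) + 1 from rfl, h1]
              omega
            exact ⟨h2, by omega⟩
      have ha := (hind (X N ω)).1
      have hb := (hind (X N ω)).2
      omega
  -- absorption at ustar
  have habs : ∀ n, N ≤ n → X n ω = ustar → ∀ k, X (n + k) ω = ustar := by
    intro n hn hX k
    induction k with
    | zero => exact hX
    | succ k ih =>
        exact ((hQ (n + k) (by omega) ustar hustarF).1 hgoodstar ih).2.2 rfl
  -- reaching ustar
  have hreach : ∃ n, N ≤ n ∧ X n ω = ustar := by
    by_contra h
    push_neg at h
    have hconst : ∀ k, visits X ustar (N + k) ω = visits X ustar N ω := by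
      intro k
      induction k with
      | zero => rfl
      | succ k ih =>
          rw [show N + (k + 1) = (N + k) + 1 from rfl, visits_succ,
            if_neg (h ((N + k) + 1) (by omega)), add_zero, ih]
    obtain ⟨n, hn⟩ := (hgoodstar.eventually_ge_atTop (visits X ustar N ω + 1)).exists
    have hle : visits X ustar n ω ≤ visits X ustar N ω := by
      rcases le_total n N with h' | h'
      · exact visits_mono X ustar ω h'
      · have := hconst (n - N)
        rw [Nat.add_sub_cancel' h'] at this
        omega
    omega
  obtain ⟨n₂, hn₂, hX₂⟩ := hreach
  refine ⟨n₂, fun n hn => ?_⟩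
  have := habs n₂ hn₂ hX₂ (n - n₂)
  rwa [Nat.add_sub_cancel' hn] at this


end IntervalDesignAux

/-- **Theorem 1(i), interval-design convergence.** If `F(u*) ∈ (p−Δ₁, p+Δ₂)`
and `u*` is the unique level whose `F` value lies in the closed interval `[p−Δ₁, p+Δ₂]`,
then the dose allocations of the interval design converge almost surely to the MTD `u*`. -/
theorem interval_design_converges_to_MTD
    {Ω : Type*} [MeasurableSpace Ω] (P : Measure Ω) [IsProbabilityMeasure P]
    (m : ℕ) (hm : 1 ≤ m)
    (F : ℕ → ℝ) (hFmono : StrictMonoOn F (Set.Icc 1 m))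
    (hF01 : ∀ v ∈ Set.Icc 1 m, F v ∈ Set.Icc (0:ℝ) 1)
    (U : ℕ → Ω → ℝ) (hUmeas : ∀ i, Measurable (U i))
    (hUindep : iIndepFun U P)
    (hUdist : ∀ i, Measure.map (U i) P = volume.restrict (Set.Icc (0:ℝ) 1))
    (X : ℕ → Ω → ℕ) (hXmeas : ∀ i, Measurable (X i))
    (hXrange : ∀ i, 1 ≤ i → ∀ ω, X i ω ∈ Set.Icc 1 m)
    (x₀ : ℕ) (hx₀ : x₀ ∈ Set.Icc 1 m) (hX1 : ∀ ω, X 1 ω = x₀)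
    (p Δ₁ Δ₂ : ℝ) (hp : p ∈ Set.Ioo (0:ℝ) 1) (hΔ₁ : 0 < Δ₁) (hΔ₂ : 0 < Δ₂)
    (hrule : intervalRule m p Δ₁ Δ₂ F U X)
    (ustar : ℕ) (hustar : ustar ∈ Set.Icc 1 m)
    (hMTD : ∀ u ∈ Set.Icc 1 m, |F ustar - p| ≤ |F u - p|)
    (hin : F ustar ∈ Set.Ioo (p - Δ₁) (p + Δ₂))
    (huniq : ∀ u ∈ Set.Icc 1 m, F u ∈ Set.Icc (p - Δ₁) (p + Δ₂) → u = ustar) :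
    ∀ᵐ ω ∂P, ∃ N, ∀ n, N ≤ n → X n ω = ustar := by
  classical
  have hXad : ∀ n, Measurable[natFilt U hUmeas n] (X (n + 1)) :=
    IntervalDesignAux.measX hUmeas hrule hX1
  have hae : ∀ᵐ ω ∂P, ∀ u ∈ (↑(Finset.Icc 1 m) : Set ℕ), ∃ c,
      Tendsto (fun n => IntervalDesignAux.NN F U X u n ω) atTop (nhds c) := by
    rw [MeasureTheory.ae_ball_iff (Finset.Icc 1 m).countable_toSet]
    intro u hu
    have hu' : u ∈ Set.Icc 1 m := by
      have := Finset.mem_Icc.1 hu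
      exact ⟨this.1, this.2⟩
    exact IntervalDesignAux.ae_NN_conv P F U X hUmeas hUindep hUdist hXmeas hXad u
      (hF01 u hu').1 (hF01 u hu').2
  filter_upwards [hae] with ω hω
  refine IntervalDesignAux.endgame m F U X hFmono p Δ₁ Δ₂ hrule hXrange ustar hustar hin
    huniq ω ?_
  intro u hu hvis
  exact IntervalDesignAux.fhat_tendsto F U X u ω hvis (hω u hu)
end
end

section
/- (Theorem 1(ii), lower boundary case.) Consider the interval design with target p ∈ (0,1) and margins Δp₁, Δp₂ > 0. If F(1) ≥ p+Δp₂ (so that the MTD is u* = 1), then almost surely there exists N such that X_n = 1 for all n ≥ N. -/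
open MeasureTheory ProbabilityTheory Filter Topology
open scoped NNReal ENNReal

noncomputable section

section AuxiliaryLemmas

namespace IDAux

variable {Ω : Type*} {F : ℕ → ℝ} {U : ℕ → Ω → ℝ} {X : ℕ → Ω → ℕ}

/-- the increment of the normalized martingale at dose `u`. -/
def D (F : ℕ → ℝ) (U : ℕ → Ω → ℝ) (X : ℕ → Ω → ℕ) (u i : ℕ) (ω : Ω) : ℝ :=
  if X i ω = u then (resp F U X i ω - F u) / (visits X u i ω : ℝ) else 0

/-- the normalized martingale at dose `u`. -/
def Msum (F : ℕ → ℝ) (U : ℕ → Ω → ℝ) (X : ℕ → Ω → ℕ) (u : ℕ) (n : ℕ) (ω : Ω) : ℝ :=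
  ∑ i ∈ Finset.Icc 1 n, D F U X u i ω

lemma visits_zero (u : ℕ) (ω : Ω) : visits X u 0 ω = 0 := by simp [visits]

lemma visits_succ (u n : ℕ) (ω : Ω) :
    visits X u (n + 1) ω = visits X u n ω + if X (n + 1) ω = u then 1 else 0 := by
  classical
  unfold visits
  rw [show Finset.Icc 1 (n+1) = insert (n+1) (Finset.Icc 1 n) by
      ext x; simp only [Finset.mem_Icc, Finset.mem_insert]; omega, Finset.filter_insert]
  split_ifs with h
  · rw [Finset.card_insert_of_notMem (by simp), add_comm]
  · simp

lemma visits_mono (u : ℕ) (ω : Ω) : Monotone fun n => visits X u n ω := by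
  intro a b hab
  exact Finset.card_le_card (Finset.filter_subset_filter _ (Finset.Icc_subset_Icc_right hab))

lemma visits_le (u n : ℕ) (ω : Ω) : visits X u n ω ≤ n := by
  calc visits X u n ω ≤ (Finset.Icc 1 n).card := Finset.card_le_card (Finset.filter_subset _ _)
  _ = n := by simp

lemma visits_pos {u i : ℕ} {ω : Ω} (hi : 1 ≤ i) (hX : X i ω = u) {n : ℕ} (hin : i ≤ n) :
    1 ≤ visits X u n ω := by
  classical
  apply Finset.card_pos.mpr
  exact ⟨i, Finset.mem_filter.mpr ⟨Finset.mem_Icc.mpr ⟨hi, hin⟩, hX⟩⟩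

lemma visits_eq_count (u n : ℕ) (ω : Ω) [DecidablePred fun i => 1 ≤ i ∧ X i ω = u] :
    visits X u n ω = Nat.count (fun i => 1 ≤ i ∧ X i ω = u) (n + 1) := by
  classical
  rw [Nat.count_eq_card_filter_range]
  unfold visits
  apply Finset.card_bij (fun i _ => i)
  · intro a ha
    simp only [Finset.mem_filter, Finset.mem_Icc] at ha
    simp only [Finset.mem_filter, Finset.mem_range]
    exact ⟨by omega, ha.1.1, ha.2⟩
  · intro a _ b _ h; exact h
  · intro b hb
    simp only [Finset.mem_filter, Finset.mem_range] at hb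
    exact ⟨b, Finset.mem_filter.mpr ⟨Finset.mem_Icc.mpr ⟨hb.2.1, by omega⟩, hb.2.2⟩, rfl⟩

/-- the sequence of centered responses along successive visits to `u`. -/
def cseq (F : ℕ → ℝ) (U : ℕ → Ω → ℝ) (X : ℕ → Ω → ℕ) (u : ℕ) (ω : Ω) (k : ℕ) : ℝ :=
  resp F U X (Nat.nth (fun i => 1 ≤ i ∧ X i ω = u) k) ω - F u

lemma Msum_eq (u : ℕ) (ω : Ω) (n : ℕ) :
    Msum F U X u n ω
      = ∑ k ∈ Finset.range (visits X u n ω), cseq F U X u ω k / ((k : ℝ) + 1) := by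
  classical
  induction n with
  | zero => simp [Msum, visits_zero]
  | succ n ih =>
    rw [Msum, Finset.sum_Icc_succ_top (by omega), ← Msum]
    by_cases hx : X (n + 1) ω = u
    · have hq : (fun i => 1 ≤ i ∧ X i ω = u) (n + 1) := ⟨by omega, hx⟩
      have hcnt : Nat.count (fun i => 1 ≤ i ∧ X i ω = u) (n + 1) = visits X u n ω :=
        (visits_eq_count u n ω).symm
      have hnth : Nat.nth (fun i => 1 ≤ i ∧ X i ω = u) (visits X u n ω) = n + 1 := by
        rw [← hcnt]; exact Nat.nth_count hq
      have hv : visits X u (n + 1) ω = visits X u n ω + 1 := by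
        rw [visits_succ, if_pos hx]
      rw [hv, Finset.sum_range_succ, ih]
      congr 1
      rw [D, if_pos hx, cseq, hnth, hv]
      push_cast
      ring
    · have hv : visits X u (n + 1) ω = visits X u n ω := by
        rw [visits_succ, if_neg hx, add_zero]
      rw [hv, ih, D, if_neg hx, add_zero]

lemma sumresp_eq (u : ℕ) (ω : Ω) (n : ℕ) :
    (∑ i ∈ Finset.Icc 1 n, if X i ω = u then resp F U X i ω else 0)
      = (visits X u n ω : ℝ) * F u + ∑ k ∈ Finset.range (visits X u n ω), cseq F U X u ω k := by
  classical
  induction n with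
  | zero => simp [visits_zero]
  | succ n ih =>
    rw [Finset.sum_Icc_succ_top (by omega), ih]
    by_cases hx : X (n + 1) ω = u
    · have hq : (fun i => 1 ≤ i ∧ X i ω = u) (n + 1) := ⟨by omega, hx⟩
      have hcnt : Nat.count (fun i => 1 ≤ i ∧ X i ω = u) (n + 1) = visits X u n ω :=
        (visits_eq_count u n ω).symm
      have hnth : Nat.nth (fun i => 1 ≤ i ∧ X i ω = u) (visits X u n ω) = n + 1 := by
        rw [← hcnt]; exact Nat.nth_count hq
      have hv : visits X u (n + 1) ω = visits X u n ω + 1 := by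
        rw [visits_succ, if_pos hx]
      rw [hv, Finset.sum_range_succ, if_pos hx, cseq, hnth]
      push_cast
      ring
    · have hv : visits X u (n + 1) ω = visits X u n ω := by
        rw [visits_succ, if_neg hx, add_zero]
      rw [hv, if_neg hx, add_zero]

lemma Fhat_eq (u : ℕ) (ω : Ω) (n : ℕ) (hv : 1 ≤ visits X u n ω) :
    Fhat F U X u n ω
      = F u + (∑ k ∈ Finset.range (visits X u n ω), cseq F U X u ω k) / (visits X u n ω : ℝ) := by
  have hne : (visits X u n ω : ℝ) ≠ 0 := by
    have : (0:ℝ) < (visits X u n ω : ℝ) := by exact_mod_cast hv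
    exact this.ne'
  rw [Fhat, sumresp_eq, add_div, mul_comm, mul_div_assoc, div_self hne, mul_one]



lemma kronecker {c : ℕ → ℝ} {L : ℝ}
    (h : Tendsto (fun K => ∑ k ∈ Finset.range K, c k / ((k : ℝ) + 1)) atTop (𝓝 L)) :
    Tendsto (fun K => (∑ k ∈ Finset.range K, c k) / (K : ℝ)) atTop (𝓝 0) := by
  set T : ℕ → ℝ := fun K => ∑ k ∈ Finset.range K, c k / ((k : ℝ) + 1) with hT
  have hid : ∀ K, ∑ k ∈ Finset.range K, c k = K * T K - ∑ k ∈ Finset.range K, T k := by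
    intro K
    induction K with
    | zero => simp
    | succ K ih =>
      rw [Finset.sum_range_succ, ih, Finset.sum_range_succ (f := T)]
      have h1 : T (K + 1) = T K + c K / ((K : ℝ) + 1) := Finset.sum_range_succ _ _
      have hKne : ((K : ℝ) + 1) ≠ 0 := by positivity
      rw [h1]
      push_cast
      field_simp
      ring
  have h2 := h.cesaro
  have h3 : Tendsto (fun K : ℕ => T K - (K : ℝ)⁻¹ * ∑ k ∈ Finset.range K, T k)
      atTop (𝓝 (L - L)) := h.sub h2
  rw [sub_self] at h3
  apply h3.congr'
  filter_upwards [eventually_ge_atTop 1] with K hK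
  have hKne : (K : ℝ) ≠ 0 := by
    have : (0:ℝ) < K := by exact_mod_cast hK
    exact this.ne'
  rw [hid K]
  field_simp

lemma nat_attains {v : ℕ → ℕ} (h0 : v 0 = 0) (hstep : ∀ n, v (n + 1) ≤ v n + 1)
    (htop : Tendsto v atTop atTop) (K : ℕ) : ∃ n, v n = K := by
  classical
  have hne : ∃ n, K ≤ v n := (htop.eventually_ge_atTop K).exists
  rcases hn0 : Nat.find hne with _ | n'
  · refine ⟨0, ?_⟩
    have := Nat.find_spec hne
    rw [hn0] at this
    omega
  · have hspec := Nat.find_spec hne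
    rw [hn0] at hspec
    have hmin : ¬ K ≤ v n' := Nat.find_min hne (by omega)
    exact ⟨n' + 1, by have := hstep n'; omega⟩

lemma sum_inv_sq_le : ∀ n : ℕ, ∑ k ∈ Finset.Icc 1 n, ((k : ℝ))⁻¹ ^ 2 ≤ 2 := by
  have key : ∀ n : ℕ, 1 ≤ n → ∑ k ∈ Finset.Icc 1 n, ((k : ℝ))⁻¹ ^ 2 ≤ 2 - (n : ℝ)⁻¹ := by
    intro n hn
    induction n with
    | zero => omega
    | succ n ih =>
      rcases Nat.eq_or_lt_of_le hn with h1 | h1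
      · simp [← h1]
        norm_num
      · have hn1 : 1 ≤ n := by omega
        have hnpos : (0:ℝ) < n := by exact_mod_cast hn1
        rw [Finset.sum_Icc_succ_top (by omega)]
        have hb : ((n : ℝ) + 1)⁻¹ ^ 2 ≤ (n : ℝ)⁻¹ - ((n : ℝ) + 1)⁻¹ := by
          have h1 : (0:ℝ) < (n : ℝ) * ((n : ℝ) + 1) := by positivity
          have h2 : (n : ℝ)⁻¹ - ((n : ℝ) + 1)⁻¹ = ((n : ℝ) * ((n : ℝ) + 1))⁻¹ := by
            field_simp
            ring
          rw [h2, pow_two, ← mul_inv]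
          gcongr
          linarith
        have := ih hn1
        push_cast
        linarith
  intro n
  rcases Nat.eq_zero_or_pos n with h | h
  · simp [h]
  · have := key n h
    have : (0:ℝ) < (n:ℝ)⁻¹ := by
      have : (0:ℝ) < n := by exact_mod_cast h
      positivity
    linarith [key n h]


lemma eventually_one {Ω : Type*} (m : ℕ) (hm : 1 ≤ m) (F : ℕ → ℝ)
    (hFmono : StrictMonoOn F (Set.Icc 1 m))
    (U : ℕ → Ω → ℝ) (X : ℕ → Ω → ℕ)
    (hXrange : ∀ i, 1 ≤ i → ∀ ω, X i ω ∈ Set.Icc 1 m)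
    (p Δ₁ Δ₂ : ℝ) (hΔ₁ : 0 < Δ₁) (hΔ₂ : 0 < Δ₂)
    (hrule : intervalRule m p Δ₁ Δ₂ F U X)
    (hbound : p + Δ₂ ≤ F 1) (ω : Ω)
    (hconv : ∀ u ∈ Set.Icc 1 m, ∃ L, Tendsto (fun n => Msum F U X u n ω) atTop (𝓝 L)) :
    ∃ N, ∀ n, N ≤ n → X n ω = 1 := by
  classical
  set V : Set ℕ := {u | {i : ℕ | 1 ≤ i ∧ X i ω = u}.Infinite} with hV
  have hVsub : ∀ u ∈ V, u ∈ Set.Icc 1 m := by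
    intro u hu
    have hu' : {i : ℕ | 1 ≤ i ∧ X i ω = u}.Infinite := hu
    obtain ⟨i, hi⟩ := hu'.nonempty
    rw [← hi.2]
    exact hXrange i hi.1 ω
  have hBfin : {n : ℕ | 1 ≤ n ∧ X n ω ∉ V}.Finite := by
    have hsub : {n : ℕ | 1 ≤ n ∧ X n ω ∉ V} ⊆
        ⋃ u ∈ (Set.Icc 1 m \ V), {i : ℕ | 1 ≤ i ∧ X i ω = u} := by
      intro n hn
      exact Set.mem_biUnion ⟨hXrange n hn.1 ω, hn.2⟩ ⟨hn.1, rfl⟩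
    refine Set.Finite.subset
      (Set.Finite.biUnion ((Set.finite_Icc 1 m).subset Set.diff_subset) ?_) hsub
    intro u hu
    exact Set.not_infinite.mp hu.2
  obtain ⟨N₀, hN₀⟩ := hBfin.bddAbove
  have hmemV : ∀ n, N₀ + 1 ≤ n → X n ω ∈ V := by
    intro n hn
    by_contra hc
    have hmem : n ∈ {n : ℕ | 1 ≤ n ∧ X n ω ∉ V} := ⟨by omega, hc⟩
    have := hN₀ hmem
    omega
  have hFhat : ∀ u ∈ V, Tendsto (fun n => Fhat F U X u n ω) atTop (𝓝 (F u)) := by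
    intro u hu
    have hu' : {i : ℕ | 1 ≤ i ∧ X i ω = u}.Infinite := hu
    obtain ⟨L, hL⟩ := hconv u (hVsub u hu)
    have hvtop : Tendsto (fun n => visits X u n ω) atTop atTop := by
      apply tendsto_atTop_atTop_of_monotone (visits_mono u ω)
      intro K
      induction K with
      | zero => exact ⟨0, Nat.zero_le _⟩
      | succ K ih =>
        obtain ⟨n, hn⟩ := ih
        obtain ⟨i, hiS, hni⟩ := hu'.exists_gt n
        refine ⟨i, ?_⟩
        have hins : insert i ((Finset.Icc 1 n).filter fun j => X j ω = u) ⊆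
            (Finset.Icc 1 i).filter fun j => X j ω = u := by
          intro j hj
          rcases Finset.mem_insert.mp hj with rfl | hj
          · exact Finset.mem_filter.mpr ⟨Finset.mem_Icc.mpr ⟨hiS.1, le_refl _⟩, hiS.2⟩
          · rw [Finset.mem_filter] at hj ⊢
            refine ⟨Finset.mem_Icc.mpr ⟨(Finset.mem_Icc.mp hj.1).1, ?_⟩, hj.2⟩
            exact le_trans (Finset.mem_Icc.mp hj.1).2 hni.le
        have hnotmem : i ∉ (Finset.Icc 1 n).filter fun j => X j ω = u := by
          intro hmem
          exact absurd (Finset.mem_Icc.mp (Finset.mem_filter.mp hmem).1).2 (by omega)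
        calc K + 1 ≤ visits X u n ω + 1 := by omega
        _ = (insert i ((Finset.Icc 1 n).filter fun j => X j ω = u)).card :=
            (Finset.card_insert_of_notMem hnotmem).symm
        _ ≤ visits X u i ω := Finset.card_le_card hins
    have hL' : Tendsto
        (fun n => ∑ k ∈ Finset.range (visits X u n ω), cseq F U X u ω k / ((k : ℝ) + 1))
        atTop (𝓝 L) := hL.congr (Msum_eq u ω)
    have hT : Tendsto (fun K => ∑ k ∈ Finset.range K, cseq F U X u ω k / ((k : ℝ) + 1))
        atTop (𝓝 L) := by
      rw [tendsto_atTop'] at hL' ⊢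
      intro s hs
      obtain ⟨N, hN⟩ := hL' s hs
      refine ⟨visits X u N ω + 1, fun K hK => ?_⟩
      obtain ⟨n, hn⟩ := nat_attains (visits_zero u ω)
        (fun n => by rw [visits_succ]; split <;> omega) hvtop K
      have hNn : N ≤ n := by
        by_contra hc
        have h5 := visits_mono (X := X) u ω (le_of_lt (not_le.mp hc))
        simp only at h5
        omega
      have := hN n hNn
      rwa [hn] at this
    have hS := kronecker hT
    have hSv : Tendsto
        (fun n => (∑ k ∈ Finset.range (visits X u n ω), cseq F U X u ω k) / (visits X u n ω : ℝ))
        atTop (𝓝 0) := hS.comp hvtop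
    have hfinal : Tendsto
        (fun n => F u + (∑ k ∈ Finset.range (visits X u n ω), cseq F U X u ω k) / (visits X u n ω : ℝ))
        atTop (𝓝 (F u + 0)) := tendsto_const_nhds.add hSv
    rw [add_zero] at hfinal
    apply hfinal.congr'
    filter_upwards [hvtop.eventually_ge_atTop 1] with n hn
    exact (Fhat_eq u ω n hn).symm
  have hQ : ∀ᶠ n in atTop, ∀ u ∈ Finset.Icc 1 m, u ∈ V →
      ((2 ≤ u → p + Δ₂ ≤ Fhat F U X u n ω) ∧ (u = 1 → p - Δ₁ < Fhat F U X u n ω)) := by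
    rw [Filter.eventually_all_finset]
    intro u hu
    by_cases huV : u ∈ V
    · have hmem := Finset.mem_Icc.mp hu
      have hFu := hFhat u huV
      have e1 : ∀ᶠ n in atTop, (2 ≤ u → p + Δ₂ ≤ Fhat F U X u n ω) := by
        by_cases h2 : 2 ≤ u
        · have hlt : p + Δ₂ < F u :=
            lt_of_le_of_lt hbound (hFmono ⟨le_refl 1, hm⟩ ⟨hmem.1, hmem.2⟩ (by omega))
          filter_upwards [hFu.eventually (eventually_gt_nhds hlt)] with n hn _
          exact hn.le
        · exact Eventually.of_forall fun n h => absurd h h2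
      have e2 : ∀ᶠ n in atTop, (u = 1 → p - Δ₁ < Fhat F U X u n ω) := by
        by_cases h1 : u = 1
        · subst h1
          have hlt : p - Δ₁ < F 1 := by linarith
          filter_upwards [hFu.eventually (eventually_gt_nhds hlt)] with n hn _
          exact hn
        · exact Eventually.of_forall fun n h => absurd h h1
      filter_upwards [e1, e2] with n h1 h2 _
      exact ⟨h1, h2⟩
    · exact Eventually.of_forall fun n h => absurd h huV
  obtain ⟨N₂, hN₂⟩ := eventually_atTop.mp hQ
  set N := max (N₀ + 1) (max N₂ 1) with hNdef
  have hstep : ∀ n, N ≤ n →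
      (X n ω = 1 → X (n + 1) ω = 1) ∧ (2 ≤ X n ω → X (n + 1) ω = X n ω - 1) := by
    intro n hn
    have h1n : 1 ≤ n := by omega
    have hXV : X n ω ∈ V := hmemV n (by omega)
    have hXIcc := hXrange n h1n ω
    obtain ⟨hstay, hup, hdown⟩ := hrule n h1n ω
    have hQn := hN₂ n (by omega) (X n ω)
      (Finset.mem_Icc.mpr ⟨hXIcc.1, hXIcc.2⟩) hXV
    constructor
    · intro h1
      have hgt : p - Δ₁ < Fhat F U X (X n ω) n ω := hQn.2 h1
      by_cases hlt : Fhat F U X (X n ω) n ω < p + Δ₂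
      · rw [hstay hgt hlt]; exact h1
      · rw [hdown (not_lt.mp hlt), h1]; omega
    · intro h2
      rw [hdown (hQn.1 h2)]
      omega
  have hdesc : ∀ j, X (N + j) ω = 1 ∨ X (N + j) ω + j ≤ X N ω := by
    intro j
    induction j with
    | zero => right; simp
    | succ j ih =>
      have hst := hstep (N + j) (by omega)
      rcases ih with h1 | hle
      · left; exact hst.1 h1
      · by_cases h1 : X (N + j) ω = 1
        · left; exact hst.1 h1
        · have hge2 : 2 ≤ X (N + j) ω := by
            have := (hXrange (N + j) (by omega) ω).1
            omega
          right
          have := hst.2 hge2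
          rw [show N + (j + 1) = N + j + 1 by omega, this]
          omega
  have hXm : X (N + m) ω = 1 := by
    rcases hdesc m with h | h
    · exact h
    · have h1 := (hXrange (N + m) (by omega) ω).1
      have h2 := (hXrange N (by omega) ω).2
      omega
  refine ⟨N + m, fun n hn => ?_⟩
  induction n, hn using Nat.le_induction with
  | base => exact hXm
  | succ n hn ih => exact (hstep n (by omega)).1 ih

end IDAux

namespace IDAux

variable {Ω : Type*} [mΩ : MeasurableSpace Ω] {P : Measure Ω} [IsProbabilityMeasure P]
  {F : ℕ → ℝ} {U : ℕ → Ω → ℝ} {X : ℕ → Ω → ℕ}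

lemma natFilt_apply (U : ℕ → Ω → ℝ) (hU : ∀ i, Measurable (U i)) (n : ℕ) :
    (natFilt U hU n : MeasurableSpace Ω)
      = ⨆ i ∈ Finset.Icc 1 n, MeasurableSpace.comap (U i) inferInstance := rfl

lemma measurable_U_natFilt (hU : ∀ i, Measurable (U i)) {i n : ℕ}
    (h1 : 1 ≤ i) (h2 : i ≤ n) : Measurable[natFilt U hU n] (U i) := by
  rw [measurable_iff_comap_le, natFilt_apply]
  exact le_iSup₂ (f := fun i (_ : i ∈ Finset.Icc 1 n) =>
    MeasurableSpace.comap (U i) inferInstance) i (Finset.mem_Icc.mpr ⟨h1, h2⟩)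

lemma measurable_resp_of {m' : MeasurableSpace Ω} {i : ℕ}
    (hU : Measurable[m'] (U i)) (hX : Measurable[m'] (X i)) :
    Measurable[m'] (resp F U X i) := by
  unfold resp
  exact Measurable.ite (measurableSet_le hU (measurable_from_top.comp hX))
    measurable_const measurable_const

lemma measurable_visits_of {m' : MeasurableSpace Ω} {u n : ℕ}
    (hX : ∀ i, 1 ≤ i → i ≤ n → Measurable[m'] (X i)) :
    Measurable[m'] (fun ω => (visits X u n ω : ℝ)) := by
  classical
  have heq : (fun ω => (visits X u n ω : ℝ))
      = fun ω => ∑ i ∈ Finset.Icc 1 n, if X i ω = u then (1 : ℝ) else 0 := by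
    funext ω
    unfold visits
    rw [Finset.card_filter]
    push_cast
    rfl
  rw [heq]
  refine Finset.measurable_sum _ fun i hi => ?_
  have hm := Finset.mem_Icc.mp hi
  exact Measurable.ite ((hX i hm.1 hm.2) (measurableSet_singleton u))
    measurable_const measurable_const

lemma measurable_D_of {m' : MeasurableSpace Ω} {u i : ℕ} (hi : 1 ≤ i)
    (hU : Measurable[m'] (U i)) (hX : ∀ j, 1 ≤ j → j ≤ i → Measurable[m'] (X j)) :
    Measurable[m'] (D F U X u i) := by
  unfold D
  exact Measurable.ite ((hX i hi le_rfl) (measurableSet_singleton u))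
    (((measurable_resp_of hU (hX i hi le_rfl)).sub measurable_const).div
      (measurable_visits_of hX))
    measurable_const

lemma measurable_Msum_of {m' : MeasurableSpace Ω} {u n : ℕ}
    (hU : ∀ i, 1 ≤ i → i ≤ n → Measurable[m'] (U i))
    (hX : ∀ j, 1 ≤ j → j ≤ n → Measurable[m'] (X j)) :
    Measurable[m'] (Msum F U X u n) := by
  unfold Msum
  refine Finset.measurable_sum _ fun i hi => ?_
  have hm := Finset.mem_Icc.mp hi
  exact measurable_D_of hm.1 (hU i hm.1 hm.2) (fun j h1 h2 => hX j h1 (le_trans h2 hm.2))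

lemma measurable_Fhat_of {m' : MeasurableSpace Ω} {u n : ℕ}
    (hU : ∀ i, 1 ≤ i → i ≤ n → Measurable[m'] (U i))
    (hX : ∀ j, 1 ≤ j → j ≤ n → Measurable[m'] (X j)) :
    Measurable[m'] (Fhat F U X u n) := by
  unfold Fhat
  refine Measurable.div ?_ (measurable_visits_of hX)
  refine Finset.measurable_sum _ fun i hi => ?_
  have hm := Finset.mem_Icc.mp hi
  exact Measurable.ite ((hX i hm.1 hm.2) (measurableSet_singleton u))
    (measurable_resp_of (hU i hm.1 hm.2) (hX i hm.1 hm.2)) measurable_const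

lemma X_adapted (m : ℕ) (p Δ₁ Δ₂ : ℝ) (hlt : p - Δ₁ < p + Δ₂)
    (hUmeas : ∀ i, Measurable (U i))
    (hXrange : ∀ i, 1 ≤ i → ∀ ω, X i ω ∈ Set.Icc 1 m)
    (x₀ : ℕ) (hX1 : ∀ ω, X 1 ω = x₀)
    (hrule : intervalRule m p Δ₁ Δ₂ F U X) :
    ∀ n i, 1 ≤ i → i ≤ n + 1 → Measurable[natFilt U hUmeas n] (X i) := by
  intro n
  induction n with
  | zero =>
    intro i h1 h2
    have hi1 : i = 1 := by omega
    subst hi1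
    have hconst : X 1 = fun _ => x₀ := funext hX1
    rw [hconst]
    exact measurable_const
  | succ n ih =>
    intro i h1 h2
    rcases Nat.lt_or_ge i (n + 2) with h | h
    · exact (ih i h1 (by omega)).mono ((natFilt U hUmeas).mono (by omega)) le_rfl
    · have hieq : i = n + 2 := by omega
      subst hieq
      have hXF : ∀ j, 1 ≤ j → j ≤ n + 1 → Measurable[natFilt U hUmeas (n + 1)] (X j) :=
        fun j ha hb => (ih j ha hb).mono ((natFilt U hUmeas).mono (by omega)) le_rfl
      have hUF : ∀ j, 1 ≤ j → j ≤ n + 1 → Measurable[natFilt U hUmeas (n + 1)] (U j) :=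
        fun j ha hb => measurable_U_natFilt hUmeas ha hb
      have hG : Measurable[natFilt U hUmeas (n + 1)]
          (fun ω => Fhat F U X (X (n + 1) ω) (n + 1) ω) := by
        have heq : (fun ω => Fhat F U X (X (n + 1) ω) (n + 1) ω)
            = fun ω => ∑ u ∈ Finset.Icc 1 m,
                if X (n + 1) ω = u then Fhat F U X u (n + 1) ω else 0 := by
          funext ω
          rw [Finset.sum_ite_eq (Finset.Icc 1 m) (X (n + 1) ω)
            (fun u => Fhat F U X u (n + 1) ω), if_pos]
          have hr := hXrange (n + 1) (by omega) ω
          exact Finset.mem_Icc.mpr ⟨hr.1, hr.2⟩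
        rw [heq]
        refine Finset.measurable_sum _ fun u _ => ?_
        exact Measurable.ite ((hXF (n + 1) (by omega) le_rfl) (measurableSet_singleton u))
          (measurable_Fhat_of hUF hXF) measurable_const
      have heq2 : X (n + 2) = fun ω =>
          if p + Δ₂ ≤ Fhat F U X (X (n + 1) ω) (n + 1) ω then max (X (n + 1) ω - 1) 1
          else if Fhat F U X (X (n + 1) ω) (n + 1) ω ≤ p - Δ₁ then min (X (n + 1) ω + 1) m
          else X (n + 1) ω := by
        funext ω
        obtain ⟨hstay, hup, hdown⟩ := hrule (n + 1) (by omega) ω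
        split_ifs with hd hu2
        · exact hdown hd
        · exact hup hu2
        · exact hstay (not_le.mp hu2) (not_le.mp hd)
      rw [heq2]
      have hXn1 := hXF (n + 1) (by omega) le_rfl
      have hmax : Measurable[natFilt U hUmeas (n + 1)] fun ω => max (X (n + 1) ω - 1) 1 :=
        (measurable_from_top (f := fun v : ℕ => max (v - 1) 1)).comp hXn1
      have hmin : Measurable[natFilt U hUmeas (n + 1)] fun ω => min (X (n + 1) ω + 1) m :=
        (measurable_from_top (f := fun v : ℕ => min (v + 1) m)).comp hXn1
      exact Measurable.ite (measurableSet_le measurable_const hG) hmax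
        (Measurable.ite (measurableSet_le hG measurable_const) hmin hXn1)

lemma indep_natFilt (hUmeas : ∀ i, Measurable (U i))
    (hUindep : iIndepFun U P) (n : ℕ) :
    Indep (MeasurableSpace.comap (U (n + 1)) inferInstance) (natFilt U hUmeas n) P := by
  have hi : iIndep (fun i => MeasurableSpace.comap (U i) inferInstance) P := hUindep.iIndep
  have h := indep_biSup_compl (fun i => (hUmeas i).comap_le) hi
    ((Finset.Icc 1 n : Finset ℕ) : Set ℕ)
  have h2 := indep_of_indep_of_le_right h
    (le_iSup₂ (f := fun i (_ : i ∈ (((Finset.Icc 1 n : Finset ℕ) : Set ℕ))ᶜ) =>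
      MeasurableSpace.comap (U i) inferInstance) (n + 1)
      (by simp [Finset.mem_Icc]))
  have h3 : (natFilt U hUmeas n : MeasurableSpace Ω)
      ≤ ⨆ i ∈ ((Finset.Icc 1 n : Finset ℕ) : Set ℕ),
          MeasurableSpace.comap (U i) inferInstance := by
    rw [natFilt_apply]
    exact iSup₂_le fun i hi2 =>
      le_iSup₂ (f := fun i (_ : i ∈ ((Finset.Icc 1 n : Finset ℕ) : Set ℕ)) =>
        MeasurableSpace.comap (U i) inferInstance) i (Finset.mem_coe.mpr hi2)
  exact (indep_of_indep_of_le_left h2 h3).symm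

lemma integrable_of_bdd' {f : Ω → ℝ} (hf : AEStronglyMeasurable f P) {C : ℝ}
    (h : ∀ ω, |f ω| ≤ C) : Integrable f P :=
  (integrable_const C).mono' hf (Filter.Eventually.of_forall (by simpa [Real.norm_eq_abs] using h))

lemma abs_sub_resp {u i : ℕ} {ω : Ω} (hu : F u ∈ Set.Icc (0 : ℝ) 1) :
    |resp F U X i ω - F u| ≤ 1 := by
  obtain ⟨h0, h1⟩ := hu
  unfold resp
  split <;> rw [abs_le] <;> constructor <;> linarith

lemma abs_D_le {u i : ℕ} (hu : F u ∈ Set.Icc (0 : ℝ) 1) (hi : 1 ≤ i) (ω : Ω) :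
    |D F U X u i ω| ≤ 1 := by
  unfold D
  split_ifs with hx
  · have hv : 1 ≤ visits X u i ω := visits_pos hi hx le_rfl
    have hvR : (1 : ℝ) ≤ (visits X u i ω : ℝ) := by exact_mod_cast hv
    rw [abs_div, abs_of_nonneg (by positivity : (0:ℝ) ≤ (visits X u i ω : ℝ)),
      div_le_one (by linarith)]
    exact le_trans (abs_sub_resp hu) hvR
  · simp

lemma abs_Msum_le {u : ℕ} (hu : F u ∈ Set.Icc (0 : ℝ) 1) (n : ℕ) (ω : Ω) :
    |Msum F U X u n ω| ≤ n := by
  unfold Msum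
  refine le_trans (Finset.abs_sum_le_sum_abs _ _) ?_
  calc ∑ i ∈ Finset.Icc 1 n, |D F U X u i ω|
      ≤ ∑ _i ∈ Finset.Icc 1 n, (1 : ℝ) :=
        Finset.sum_le_sum fun i hi => abs_D_le hu (Finset.mem_Icc.mp hi).1 ω
    _ = n := by simp

lemma visits_lt {u a b : ℕ} {ω : Ω} (hb1 : 1 ≤ b) (hb : X b ω = u) (hab : a < b) :
    visits X u a ω < visits X u b ω := by
  classical
  have hins : insert b ((Finset.Icc 1 a).filter fun j => X j ω = u) ⊆
      (Finset.Icc 1 b).filter fun j => X j ω = u := by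
    intro j hj
    rcases Finset.mem_insert.mp hj with rfl | hj
    · exact Finset.mem_filter.mpr ⟨Finset.mem_Icc.mpr ⟨hb1, le_refl _⟩, hb⟩
    · rw [Finset.mem_filter] at hj ⊢
      refine ⟨Finset.mem_Icc.mpr ⟨(Finset.mem_Icc.mp hj.1).1, ?_⟩, hj.2⟩
      exact le_trans (Finset.mem_Icc.mp hj.1).2 (by omega)
  have hnotmem : b ∉ (Finset.Icc 1 a).filter fun j => X j ω = u := by
    intro hmem
    exact absurd (Finset.mem_Icc.mp (Finset.mem_filter.mp hmem).1).2 (by omega)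
  have : visits X u a ω + 1 ≤ visits X u b ω := by
    calc visits X u a ω + 1
        = (insert b ((Finset.Icc 1 a).filter fun j => X j ω = u)).card :=
          (Finset.card_insert_of_notMem hnotmem).symm
      _ ≤ visits X u b ω := Finset.card_le_card hins
  omega

lemma sum_D_sq_le {u : ℕ} (hu : F u ∈ Set.Icc (0 : ℝ) 1) (n : ℕ) (ω : Ω) :
    ∑ i ∈ Finset.Icc 1 n, (D F U X u i ω) ^ 2 ≤ 2 := by
  classical
  have hterm : ∀ i ∈ Finset.Icc 1 n, (D F U X u i ω) ^ 2
      ≤ (if X i ω = u then ((visits X u i ω : ℝ))⁻¹ ^ 2 else 0) := by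
    intro i hi
    unfold D
    split_ifs with hx
    · rw [div_eq_mul_inv, mul_pow]
      have h1 : (resp F U X i ω - F u) ^ 2 ≤ 1 := by
        have h := abs_sub_resp (U := U) (X := X) (i := i) (ω := ω) hu
        calc (resp F U X i ω - F u) ^ 2 = |resp F U X i ω - F u| ^ 2 :=
              (sq_abs _).symm
          _ ≤ 1 ^ 2 := pow_le_pow_left₀ (abs_nonneg _) h 2
          _ = 1 := one_pow 2
      calc (resp F U X i ω - F u) ^ 2 * ((visits X u i ω : ℝ))⁻¹ ^ 2
          ≤ 1 * ((visits X u i ω : ℝ))⁻¹ ^ 2 := by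
            apply mul_le_mul_of_nonneg_right h1 (by positivity)
        _ = ((visits X u i ω : ℝ))⁻¹ ^ 2 := one_mul _
    · simp
  refine le_trans (Finset.sum_le_sum hterm) ?_
  rw [← Finset.sum_filter]
  set A := (Finset.Icc 1 n).filter fun i => X i ω = u with hA
  have hinj : ∀ x ∈ A, ∀ y ∈ A, visits X u x ω = visits X u y ω → x = y := by
    intro a ha b hb hab
    have ha' := Finset.mem_filter.mp ha
    have hb' := Finset.mem_filter.mp hb
    rcases lt_trichotomy a b with h | h | h
    · have := visits_lt (Finset.mem_Icc.mp hb'.1).1 hb'.2 h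
      omega
    · exact h
    · have := visits_lt (Finset.mem_Icc.mp ha'.1).1 ha'.2 h
      omega
  have himg : A.image (fun i => visits X u i ω) ⊆ Finset.Icc 1 n := by
    intro k hk
    obtain ⟨i, hiA, rfl⟩ := Finset.mem_image.mp hk
    have hi' := Finset.mem_filter.mp hiA
    have h1 := (Finset.mem_Icc.mp hi'.1).1
    have h2 := (Finset.mem_Icc.mp hi'.1).2
    refine Finset.mem_Icc.mpr ⟨visits_pos h1 hi'.2 le_rfl, le_trans (visits_le u i ω) h2⟩
  calc ∑ i ∈ A, ((visits X u i ω : ℝ))⁻¹ ^ 2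
      = ∑ k ∈ A.image (fun i => visits X u i ω), ((k : ℝ))⁻¹ ^ 2 :=
        (Finset.sum_image (g := fun i => visits X u i ω) (f := fun k : ℕ => ((k : ℝ))⁻¹ ^ 2) hinj).symm
    _ ≤ ∑ k ∈ Finset.Icc 1 n, ((k : ℝ))⁻¹ ^ 2 :=
        Finset.sum_le_sum_of_subset_of_nonneg himg (fun k _ _ => by positivity)
    _ ≤ 2 := sum_inv_sq_le n

end IDAux

namespace IDAux

variable {Ω : Type*} [mΩ : MeasurableSpace Ω] {P : Measure Ω} [IsProbabilityMeasure P]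
  {F : ℕ → ℝ} {U : ℕ → Ω → ℝ} {X : ℕ → Ω → ℕ}

lemma condexp_mul_indicator_zero (hUmeas : ∀ i, Measurable (U i))
    (hUindep : iIndepFun U P)
    (hUdist : ∀ i, Measure.map (U i) P = volume.restrict (Set.Icc (0:ℝ) 1))
    {c : ℝ} (hc0 : 0 ≤ c) (hc1 : c ≤ 1) (n : ℕ)
    {g : Ω → ℝ} (hg : Measurable[natFilt U hUmeas n] g) (hgb : ∀ ω, |g ω| ≤ 1) :
    P[(fun ω => g ω * ((if U (n + 1) ω ≤ c then (1:ℝ) else 0) - c)) | natFilt U hUmeas n]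
      =ᵐ[P] 0 := by
  classical
  have hhmeas : Measurable (fun t : ℝ => (if t ≤ c then (1:ℝ) else 0) - c) :=
    (Measurable.ite measurableSet_Iic measurable_const measurable_const).sub measurable_const
  have hUn := hUmeas (n + 1)
  have hcomp : Measurable (fun ω => (if U (n + 1) ω ≤ c then (1:ℝ) else 0) - c) :=
    hhmeas.comp hUn
  have hhb : ∀ ω, |(if U (n + 1) ω ≤ c then (1:ℝ) else 0) - c| ≤ 2 := by
    intro ω; split_ifs <;> rw [abs_le] <;> constructor <;> linarith
  have hint_h : Integrable (fun ω => (if U (n + 1) ω ≤ c then (1:ℝ) else 0) - c) P :=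
    integrable_of_bdd' hcomp.aestronglyMeasurable hhb
  have hgmeas0 : Measurable g := hg.mono ((natFilt U hUmeas).le n) le_rfl
  have hint_prod :
      Integrable (fun ω => g ω * ((if U (n + 1) ω ≤ c then (1:ℝ) else 0) - c)) P := by
    refine integrable_of_bdd' ((hgmeas0.mul hcomp).aestronglyMeasurable) (C := 2) ?_
    intro ω
    rw [abs_mul]
    calc |g ω| * |(if U (n + 1) ω ≤ c then (1:ℝ) else 0) - c|
        ≤ 1 * 2 := mul_le_mul (hgb ω) (hhb ω) (abs_nonneg _) (by norm_num)
      _ = 2 := by norm_num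
  have h1 := condExp_mul_of_stronglyMeasurable_left hg.stronglyMeasurable hint_prod hint_h
  have hsm : StronglyMeasurable[MeasurableSpace.comap (U (n + 1)) inferInstance]
      (fun ω => (if U (n + 1) ω ≤ c then (1:ℝ) else 0) - c) :=
    (hhmeas.comp (measurable_iff_comap_le.mpr le_rfl)).stronglyMeasurable
  have h2 : P[(fun ω => (if U (n + 1) ω ≤ c then (1:ℝ) else 0) - c) | natFilt U hUmeas n]
      =ᵐ[P] fun _ => ∫ ω, ((if U (n + 1) ω ≤ c then (1:ℝ) else 0) - c) ∂P :=
    condExp_indep_eq (hUmeas (n + 1)).comap_le ((natFilt U hUmeas).le n) hsm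
      (indep_natFilt hUmeas hUindep n)
  have hzero : ∫ ω, ((if U (n + 1) ω ≤ c then (1:ℝ) else 0) - c) ∂P = 0 := by
    rw [← integral_map hUn.aemeasurable hhmeas.aestronglyMeasurable, hUdist (n + 1)]
    haveI : IsProbabilityMeasure (volume.restrict (Set.Icc (0:ℝ) 1)) := by
      constructor
      rw [Measure.restrict_apply_univ, Real.volume_Icc]
      norm_num
    have hind : (fun t : ℝ => (if t ≤ c then (1:ℝ) else 0) - c)
        = fun t => Set.indicator (Set.Iic c) (fun _ => (1:ℝ)) t - c := by
      funext t
      rw [Set.indicator_apply]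
      simp [Set.mem_Iic]
    rw [hind]
    rw [integral_sub ((integrable_const (1:ℝ)).indicator measurableSet_Iic)
      (integrable_const c)]
    rw [integral_indicator measurableSet_Iic, setIntegral_const, integral_const]
    have hseteq : Set.Iic c ∩ Set.Icc (0:ℝ) 1 = Set.Icc 0 c := by
      ext t
      simp only [Set.mem_inter_iff, Set.mem_Iic, Set.mem_Icc]
      constructor
      · rintro ⟨ha, hb, _⟩; exact ⟨hb, ha⟩
      · rintro ⟨ha, hb⟩; exact ⟨hb, ha, le_trans hb hc1⟩
    rw [Measure.real, Measure.restrict_apply measurableSet_Iic, hseteq, Real.volume_Icc,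
      ENNReal.toReal_ofReal (by linarith)]
    simp
  refine h1.trans ?_
  filter_upwards [h2] with ω hω
  rw [Pi.mul_apply, hω, hzero, mul_zero]
  rfl

lemma condexp_D_zero (hUmeas : ∀ i, Measurable (U i))
    (hUindep : iIndepFun U P)
    (hUdist : ∀ i, Measure.map (U i) P = volume.restrict (Set.Icc (0:ℝ) 1))
    {u : ℕ} (hu : F u ∈ Set.Icc (0:ℝ) 1) (n : ℕ)
    (hadapt : ∀ j, 1 ≤ j → j ≤ n + 1 → Measurable[natFilt U hUmeas n] (X j)) :
    P[D F U X u (n + 1) | natFilt U hUmeas n] =ᵐ[P] 0 := by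
  classical
  have hXn1 : Measurable[natFilt U hUmeas n] (X (n + 1)) := hadapt (n + 1) (by omega) le_rfl
  have hgmeas : Measurable[natFilt U hUmeas n]
      (fun ω => if X (n + 1) ω = u then ((visits X u n ω : ℝ) + 1)⁻¹ else 0) :=
    Measurable.ite (hXn1 (measurableSet_singleton u))
      (((measurable_visits_of (fun j a b => hadapt j a (by omega))).add measurable_const).inv)
      measurable_const
  have hgb : ∀ ω, |if X (n + 1) ω = u then ((visits X u n ω : ℝ) + 1)⁻¹ else 0| ≤ 1 := by
    intro ω
    split_ifs
    · rw [abs_of_nonneg (by positivity)]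
      rw [inv_le_one_iff₀]
      right
      have : (0:ℝ) ≤ (visits X u n ω : ℝ) := by positivity
      linarith
    · simp
  have hdg : D F U X u (n + 1) = fun ω =>
      (if X (n + 1) ω = u then ((visits X u n ω : ℝ) + 1)⁻¹ else 0) *
        ((if U (n + 1) ω ≤ F u then (1:ℝ) else 0) - F u) := by
    funext ω
    by_cases hx : X (n + 1) ω = u
    · unfold D
      rw [if_pos hx, if_pos hx]
      have hrw : resp F U X (n + 1) ω = if U (n + 1) ω ≤ F u then (1:ℝ) else 0 := by
        unfold resp; rw [hx]
      rw [hrw, visits_succ, if_pos hx]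
      push_cast
      rw [div_eq_mul_inv, mul_comm]
    · unfold D
      rw [if_neg hx, if_neg hx, zero_mul]
  rw [hdg]
  exact condexp_mul_indicator_zero hUmeas hUindep hUdist hu.1 hu.2 n hgmeas hgb

lemma Msum_succ (u n : ℕ) :
    Msum F U X u (n + 1) = Msum F U X u n + D F U X u (n + 1) := by
  funext ω
  rw [Msum, Finset.sum_Icc_succ_top (by omega)]
  rfl

lemma martingale_Msum (hUmeas : ∀ i, Measurable (U i))
    (hUindep : iIndepFun U P)
    (hUdist : ∀ i, Measure.map (U i) P = volume.restrict (Set.Icc (0:ℝ) 1))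
    (hXmeas : ∀ i, Measurable (X i))
    {u : ℕ} (hu : F u ∈ Set.Icc (0:ℝ) 1)
    (hadapt : ∀ n j, 1 ≤ j → j ≤ n + 1 → Measurable[natFilt U hUmeas n] (X j)) :
    Martingale (Msum F U X u) (natFilt U hUmeas) P := by
  have hMmeas : ∀ n, Measurable[natFilt U hUmeas n] (Msum F U X u n) := fun n =>
    measurable_Msum_of (fun i a b => measurable_U_natFilt hUmeas a b)
      (fun j a b => hadapt n j a (by omega))
  have hMint : ∀ n, Integrable (Msum F U X u n) P := fun n =>
    integrable_of_bdd' ((hMmeas n).mono ((natFilt U hUmeas).le n) le_rfl).aestronglyMeasurable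
      (abs_Msum_le hu n)
  refine martingale_nat (fun n => (hMmeas n).stronglyMeasurable) hMint fun n => ?_
  have hDint : Integrable (D F U X u (n + 1)) P :=
    integrable_of_bdd'
      ((measurable_D_of (by omega) (hUmeas (n + 1)) fun j a b => hXmeas j).aestronglyMeasurable)
      (fun ω => abs_D_le hu (by omega) ω)
  have hc : P[Msum F U X u (n + 1) | natFilt U hUmeas n] =ᵐ[P] Msum F U X u n := by
    rw [Msum_succ]
    refine (condExp_add (hMint n) hDint _).trans ?_
    rw [condExp_of_stronglyMeasurable ((natFilt U hUmeas).le n)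
      (hMmeas n).stronglyMeasurable (hMint n)]
    filter_upwards [condexp_D_zero hUmeas hUindep hUdist hu n (hadapt n)] with ω hω
    rw [Pi.add_apply, hω]
    simp
  exact hc.symm

lemma integral_Msum_sq_le (hUmeas : ∀ i, Measurable (U i))
    (hUindep : iIndepFun U P)
    (hUdist : ∀ i, Measure.map (U i) P = volume.restrict (Set.Icc (0:ℝ) 1))
    (hXmeas : ∀ i, Measurable (X i))
    {u : ℕ} (hu : F u ∈ Set.Icc (0:ℝ) 1)
    (hadapt : ∀ n j, 1 ≤ j → j ≤ n + 1 → Measurable[natFilt U hUmeas n] (X j)) :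
    ∀ n, ∫ ω, (Msum F U X u n ω) ^ 2 ∂P ≤ 2 := by
  have hDm : ∀ i, 1 ≤ i → Measurable (D F U X u i) := fun i hi =>
    measurable_D_of hi (hUmeas i) (fun j a b => hXmeas j)
  have hMm : ∀ n, Measurable (Msum F U X u n) := fun n =>
    measurable_Msum_of (fun i a b => hUmeas i) (fun j a b => hXmeas j)
  have hMmeas : ∀ n, Measurable[natFilt U hUmeas n] (Msum F U X u n) := fun n =>
    measurable_Msum_of (fun i a b => measurable_U_natFilt hUmeas a b)
      (fun j a b => hadapt n j a (by omega))
  have hDint : ∀ i, 1 ≤ i → Integrable (D F U X u i) P := fun i hi =>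
    integrable_of_bdd' ((hDm i hi).aestronglyMeasurable) (fun ω => abs_D_le hu hi ω)
  have hsum_int : ∀ n, Integrable (fun ω => ∑ i ∈ Finset.Icc 1 n, (D F U X u i ω) ^ 2) P := by
    intro n
    refine integrable_of_bdd' (Measurable.aestronglyMeasurable ?_) (C := 2) ?_
    · exact Finset.measurable_sum _ fun i hi =>
        ((hDm i (Finset.mem_Icc.mp hi).1).pow measurable_const)
    · intro ω
      rw [abs_of_nonneg (by positivity)]
      exact sum_D_sq_le hu n ω
  have key : ∀ n, ∫ ω, (Msum F U X u n ω) ^ 2 ∂P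
      ≤ ∫ ω, (∑ i ∈ Finset.Icc 1 n, (D F U X u i ω) ^ 2) ∂P := by
    intro n
    induction n with
    | zero => simp [Msum]
    | succ n ih =>
      have int_M2 : Integrable (fun ω => (Msum F U X u n ω) ^ 2) P := by
        refine integrable_of_bdd' (((hMm n).pow measurable_const).aestronglyMeasurable)
          (C := (n : ℝ) ^ 2) ?_
        intro ω
        rw [abs_pow]
        exact pow_le_pow_left₀ (abs_nonneg _) (abs_Msum_le hu n ω) 2
      have int_D2 : Integrable (fun ω => (D F U X u (n + 1) ω) ^ 2) P := by
        refine integrable_of_bdd'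
          (((hDm (n + 1) (by omega)).pow measurable_const).aestronglyMeasurable) (C := 1) ?_
        intro ω
        rw [abs_pow]
        calc |D F U X u (n + 1) ω| ^ 2 ≤ 1 ^ 2 :=
              pow_le_pow_left₀ (abs_nonneg _) (abs_D_le hu (by omega) ω) 2
          _ = 1 := one_pow 2
      have int_MD : Integrable (fun ω => Msum F U X u n ω * D F U X u (n + 1) ω) P := by
        refine integrable_of_bdd' (((hMm n).mul (hDm (n + 1) (by omega))).aestronglyMeasurable)
          (C := (n : ℝ)) ?_
        intro ω
        rw [abs_mul]
        calc |Msum F U X u n ω| * |D F U X u (n + 1) ω|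
            ≤ (n : ℝ) * 1 := mul_le_mul (abs_Msum_le hu n ω) (abs_D_le hu (by omega) ω)
              (abs_nonneg _) (by positivity)
          _ = (n : ℝ) := mul_one _
      have int_MD' : Integrable (Msum F U X u n * D F U X u (n + 1)) P := int_MD
      have hcross : ∫ ω, Msum F U X u n ω * D F U X u (n + 1) ω ∂P = 0 := by
        have hmul := condExp_mul_of_stronglyMeasurable_left (hMmeas n).stronglyMeasurable int_MD'
          (hDint (n + 1) (by omega))
        have hcd := condexp_D_zero hUmeas hUindep hUdist hu n (hadapt n)
        have h0 : P[Msum F U X u n * D F U X u (n + 1) | natFilt U hUmeas n]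
            =ᵐ[P] fun _ => (0:ℝ) := by
          refine hmul.trans ?_
          filter_upwards [hcd] with ω hω
          rw [Pi.mul_apply, hω]
          simp
        calc ∫ ω, Msum F U X u n ω * D F U X u (n + 1) ω ∂P
            = ∫ ω, (P[Msum F U X u n * D F U X u (n + 1) | natFilt U hUmeas n]) ω ∂P :=
              (integral_condExp ((natFilt U hUmeas).le n) (f := Msum F U X u n * D F U X u (n + 1))).symm
          _ = 0 := by rw [integral_congr_ae h0]; simp
      have hpt : (fun ω => (Msum F U X u (n + 1) ω) ^ 2)
          = fun ω => (Msum F U X u n ω) ^ 2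
              + (2 * (Msum F U X u n ω * D F U X u (n + 1) ω) + (D F U X u (n + 1) ω) ^ 2) := by
        funext ω
        rw [Msum_succ, Pi.add_apply]
        ring
      rw [hpt]
      have int_rest : Integrable (fun ω =>
          2 * (Msum F U X u n ω * D F U X u (n + 1) ω) + (D F U X u (n + 1) ω) ^ 2) P :=
        (int_MD.const_mul 2).add int_D2
      rw [integral_add int_M2 int_rest, integral_add (int_MD.const_mul 2) int_D2,
        integral_const_mul, hcross, mul_zero, zero_add]
      have hrhs : (fun ω => ∑ i ∈ Finset.Icc 1 (n + 1), (D F U X u i ω) ^ 2)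
          = fun ω => (∑ i ∈ Finset.Icc 1 n, (D F U X u i ω) ^ 2)
              + (D F U X u (n + 1) ω) ^ 2 := by
        funext ω
        rw [Finset.sum_Icc_succ_top (by omega)]
      rw [hrhs, integral_add (hsum_int n) int_D2]
      linarith [ih]
  intro n
  refine le_trans (key n) ?_
  calc ∫ ω, (∑ i ∈ Finset.Icc 1 n, (D F U X u i ω) ^ 2) ∂P
      ≤ ∫ (_ : Ω), (2:ℝ) ∂P :=
        integral_mono (hsum_int n) (integrable_const 2) (fun ω => sum_D_sq_le hu n ω)
    _ = 2 := by simp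

lemma eLpNorm_Msum_le (hUmeas : ∀ i, Measurable (U i))
    (hUindep : iIndepFun U P)
    (hUdist : ∀ i, Measure.map (U i) P = volume.restrict (Set.Icc (0:ℝ) 1))
    (hXmeas : ∀ i, Measurable (X i))
    {u : ℕ} (hu : F u ∈ Set.Icc (0:ℝ) 1)
    (hadapt : ∀ n j, 1 ≤ j → j ≤ n + 1 → Measurable[natFilt U hUmeas n] (X j)) :
    ∀ n, eLpNorm (Msum F U X u n) 1 P ≤ ((2 : ℝ≥0) : ℝ≥0∞) := by
  intro n
  have hMm : Measurable (Msum F U X u n) :=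
    measurable_Msum_of (fun i a b => hUmeas i) (fun j a b => hXmeas j)
  have hint : Integrable (Msum F U X u n) P :=
    integrable_of_bdd' hMm.aestronglyMeasurable (abs_Msum_le hu n)
  have int_M2 : Integrable (fun ω => (Msum F U X u n ω) ^ 2) P := by
    refine integrable_of_bdd' ((hMm.pow measurable_const).aestronglyMeasurable)
      (C := (n : ℝ) ^ 2) ?_
    intro ω
    rw [abs_pow]
    exact pow_le_pow_left₀ (abs_nonneg _) (abs_Msum_le hu n ω) 2
  have hsq := integral_Msum_sq_le hUmeas hUindep hUdist hXmeas hu hadapt n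
  have habs : ∫ ω, ‖Msum F U X u n ω‖ ∂P ≤ 3 / 2 := by
    have hle : ∀ ω, ‖Msum F U X u n ω‖ ≤ (1 + (Msum F U X u n ω) ^ 2) / 2 := by
      intro ω
      rw [Real.norm_eq_abs]
      nlinarith [sq_nonneg (|Msum F U X u n ω| - 1), sq_abs (Msum F U X u n ω),
        abs_nonneg (Msum F U X u n ω)]
    calc ∫ ω, ‖Msum F U X u n ω‖ ∂P
        ≤ ∫ ω, (1 + (Msum F U X u n ω) ^ 2) / 2 ∂P :=
          integral_mono hint.norm (((integrable_const (1:ℝ)).add int_M2).div_const 2) hle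
      _ = (∫ ω, (1 + (Msum F U X u n ω) ^ 2) ∂P) / 2 := integral_div 2 _
      _ = (1 + ∫ ω, (Msum F U X u n ω) ^ 2 ∂P) / 2 := by
          rw [integral_add (integrable_const 1) int_M2, integral_const]
          simp
      _ ≤ (1 + 2) / 2 := by linarith
      _ ≤ 3 / 2 := by norm_num
  rw [eLpNorm_one_eq_lintegral_enorm, ← ofReal_integral_norm_eq_lintegral_enorm hint]
  calc ENNReal.ofReal (∫ ω, ‖Msum F U X u n ω‖ ∂P)
      ≤ ENNReal.ofReal 2 := ENNReal.ofReal_le_ofReal (by linarith)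
    _ = ((2 : ℝ≥0) : ℝ≥0∞) := by norm_num

lemma ae_tendsto_Msum (hUmeas : ∀ i, Measurable (U i))
    (hUindep : iIndepFun U P)
    (hUdist : ∀ i, Measure.map (U i) P = volume.restrict (Set.Icc (0:ℝ) 1))
    (hXmeas : ∀ i, Measurable (X i))
    {u : ℕ} (hu : F u ∈ Set.Icc (0:ℝ) 1)
    (hadapt : ∀ n j, 1 ≤ j → j ≤ n + 1 → Measurable[natFilt U hUmeas n] (X j)) :
    ∀ᵐ ω ∂P, ∃ c, Tendsto (fun n => Msum F U X u n ω) atTop (𝓝 c) :=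
  Submartingale.exists_ae_tendsto_of_bdd (R := 2)
    (martingale_Msum hUmeas hUindep hUdist hXmeas hu hadapt).submartingale
    (eLpNorm_Msum_le hUmeas hUindep hUdist hXmeas hu hadapt)

end IDAux

end AuxiliaryLemmas

/-- **Theorem 1(ii), lower boundary case.** If `F(1) ≥ p+Δ₂` (so that the MTD
is the lowest level `u* = 1`), then almost surely the interval design eventually settles at
level `1`. -/
theorem interval_design_converges_lower_boundary
    {Ω : Type*} [MeasurableSpace Ω] (P : Measure Ω) [IsProbabilityMeasure P]
    (m : ℕ) (hm : 1 ≤ m)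
    (F : ℕ → ℝ) (hFmono : StrictMonoOn F (Set.Icc 1 m))
    (hF01 : ∀ v ∈ Set.Icc 1 m, F v ∈ Set.Icc (0:ℝ) 1)
    (U : ℕ → Ω → ℝ) (hUmeas : ∀ i, Measurable (U i))
    (hUindep : iIndepFun U P)
    (hUdist : ∀ i, Measure.map (U i) P = volume.restrict (Set.Icc (0:ℝ) 1))
    (X : ℕ → Ω → ℕ) (hXmeas : ∀ i, Measurable (X i))
    (hXrange : ∀ i, 1 ≤ i → ∀ ω, X i ω ∈ Set.Icc 1 m)
    (x₀ : ℕ) (hx₀ : x₀ ∈ Set.Icc 1 m) (hX1 : ∀ ω, X 1 ω = x₀)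
    (p Δ₁ Δ₂ : ℝ) (hp : p ∈ Set.Ioo (0:ℝ) 1) (hΔ₁ : 0 < Δ₁) (hΔ₂ : 0 < Δ₂)
    (hrule : intervalRule m p Δ₁ Δ₂ F U X)
    (hbound : p + Δ₂ ≤ F 1) :
    ∀ᵐ ω ∂P, ∃ N, ∀ n, N ≤ n → X n ω = 1 := by
  classical
  have hadapt := IDAux.X_adapted m p Δ₁ Δ₂ (by linarith) hUmeas hXrange x₀ hX1 hrule
  have hconv : ∀ᵐ ω ∂P, ∀ u, u ∈ Set.Icc 1 m →
      ∃ c, Tendsto (fun n => IDAux.Msum F U X u n ω) atTop (nhds c) := by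
    rw [MeasureTheory.ae_all_iff]
    intro u
    by_cases hu : u ∈ Set.Icc 1 m
    · filter_upwards [IDAux.ae_tendsto_Msum hUmeas hUindep hUdist hXmeas (hF01 u hu) hadapt]
        with ω hc _
      exact hc
    · exact Filter.Eventually.of_forall fun ω h => absurd h hu
  filter_upwards [hconv] with ω hω
  exact IDAux.eventually_one m hm F hFmono U X hXrange p Δ₁ Δ₂ hΔ₁ hΔ₂ hrule hbound ω hω
end
end

section
/- (Theorem 1(ii), upper boundary case.) Consider the interval design with target p ∈ (0,1) and margins Δp₁, Δp₂ > 0. If F(m) ≤ p−Δp₁ (so that the MTD is u* = m), then almost surely there exists N such that X_n = m for all n ≥ N. -/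
open MeasureTheory ProbabilityTheory Filter

noncomputable section

open Topology

lemma aux_sum_inv_sq (n : ℕ) : ∑ k ∈ Finset.Icc 1 n, ((k : ℝ))⁻¹ ^ 2 ≤ 2 - (n : ℝ)⁻¹ := by
  induction n with
  | zero => simp
  | succ n ih =>
    rw [Finset.sum_Icc_succ_top (by omega)]
    rcases Nat.eq_zero_or_pos n with h | h
    · subst h; norm_num
    have h1 : (1:ℝ) ≤ (n:ℝ) := by exact_mod_cast h
    have hn0 : (0:ℝ) < (n:ℝ) := by linarith
    have hn1 : (0:ℝ) < ((n:ℝ) + 1) := by linarith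
    have h2 : (0:ℝ) < (n:ℝ) * ((n:ℝ)+1) := by positivity
    have key : (((n:ℕ)+1 : ℕ) : ℝ)⁻¹ ^ 2 ≤ (n:ℝ)⁻¹ - ((n:ℝ)+1)⁻¹ := by
      push_cast
      rw [inv_sub_inv (ne_of_gt hn0) (ne_of_gt hn1)]
      have h4 : ((n:ℝ)+1 - n) = 1 := by ring
      rw [h4, pow_two, ← mul_inv, one_div]
      exact inv_anti₀ h2 (by nlinarith)
    have := ih
    push_cast at key ⊢
    linarith

lemma aux_cesaro (d : ℕ → ℝ) (hd0 : ∀ i, 0 ≤ d i) (hd1 : ∀ i, d i ≤ 1)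
    (hA : Tendsto (fun n => ∑ i ∈ Finset.Icc 1 n, d i) atTop atTop)
    (g : ℕ → ℝ) (L : ℝ) (hg : Tendsto g atTop (𝓝 L)) :
    Tendsto (fun n => (∑ i ∈ Finset.Icc 1 n, d i * g i) / (∑ i ∈ Finset.Icc 1 n, d i))
      atTop (𝓝 L) := by
  rw [Metric.tendsto_atTop]
  intro ε hε
  obtain ⟨I, hI⟩ := (Metric.tendsto_atTop.1 hg) (ε/2) (by linarith)
  set C : ℝ := ∑ i ∈ Finset.Icc 1 I, |g i - L| with hC
  have hC0 : 0 ≤ C := Finset.sum_nonneg fun i _ => abs_nonneg _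
  obtain ⟨M, hM⟩ := eventually_atTop.1 (hA.eventually_ge_atTop (max (2 * C / ε + 1) 1))
  refine ⟨max M I, fun n hn => ?_⟩
  have hnM : M ≤ n := le_trans (le_max_left _ _) hn
  have hnI : I ≤ n := le_trans (le_max_right _ _) hn
  set A : ℝ := ∑ i ∈ Finset.Icc 1 n, d i with hAdef
  have hApos : 0 < A := lt_of_lt_of_le (by norm_num) (le_trans (le_max_right _ _) (hM n hnM))
  have hAC : 2 * C / ε + 1 ≤ A := le_trans (le_max_left _ _) (hM n hnM)
  have key : |(∑ i ∈ Finset.Icc 1 n, d i * g i) - A * L| ≤ C + ε/2 * A := by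
    have e1 : (∑ i ∈ Finset.Icc 1 n, d i * g i) - A * L
        = ∑ i ∈ Finset.Icc 1 n, d i * (g i - L) := by
      rw [hAdef, Finset.sum_mul, ← Finset.sum_sub_distrib]
      congr 1; ext i; ring
    rw [e1]
    refine le_trans (Finset.abs_sum_le_sum_abs _ _) ?_
    have split : Finset.Icc 1 n = Finset.Icc 1 I ∪ Finset.Ioc I n := by
      ext a
      simp only [Finset.mem_Icc, Finset.mem_Ioc, Finset.mem_union]
      omega
    rw [split, Finset.sum_union (by
      apply Finset.disjoint_left.2
      intro a ha hb
      simp only [Finset.mem_Icc, Finset.mem_Ioc] at ha hb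
      omega)]
    have t1 : ∑ i ∈ Finset.Icc 1 I, |d i * (g i - L)| ≤ C := by
      rw [hC]
      refine Finset.sum_le_sum fun i _ => ?_
      rw [abs_mul, abs_of_nonneg (hd0 i)]
      nlinarith [abs_nonneg (g i - L), hd1 i, hd0 i]
    have t2 : ∑ i ∈ Finset.Ioc I n, |d i * (g i - L)| ≤ ε/2 * A := by
      have step : ∑ i ∈ Finset.Ioc I n, |d i * (g i - L)|
          ≤ ∑ i ∈ Finset.Ioc I n, ε/2 * d i := by
        refine Finset.sum_le_sum fun i hi => ?_
        rw [abs_mul, abs_of_nonneg (hd0 i)]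
        have := hI i (by simp only [Finset.mem_Ioc] at hi; omega)
        rw [Real.dist_eq] at this
        nlinarith [hd0 i]
      refine le_trans step ?_
      rw [← Finset.mul_sum]
      have hsub : ∑ i ∈ Finset.Ioc I n, d i ≤ A := by
        rw [hAdef, split, Finset.sum_union (by
          apply Finset.disjoint_left.2
          intro a ha hb
          simp only [Finset.mem_Icc, Finset.mem_Ioc] at ha hb
          omega)]
        have : 0 ≤ ∑ i ∈ Finset.Icc 1 I, d i := Finset.sum_nonneg fun i _ => hd0 i
        linarith
      nlinarith
    linarith
  -- conclude
  have h5 : |(∑ i ∈ Finset.Icc 1 n, d i * g i) / A - L| ≤ C / A + ε/2 := by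
    have : (∑ i ∈ Finset.Icc 1 n, d i * g i) / A - L
        = ((∑ i ∈ Finset.Icc 1 n, d i * g i) - A * L) / A := by
      field_simp
    rw [this, abs_div, abs_of_pos hApos, div_le_iff₀ hApos]
    calc |(∑ i ∈ Finset.Icc 1 n, d i * g i) - A * L| ≤ C + ε/2 * A := key
      _ = (C / A + ε/2) * A := by field_simp
  rw [Real.dist_eq]
  have hCA : C / A < ε / 2 := by
    rw [div_lt_iff₀ hApos]
    have hdiv : 2 * C / ε * ε = 2 * C := div_mul_cancel₀ _ (ne_of_gt hε)
    have h7 : (A - (2*C/ε+1)) * ε ≥ 0 := mul_nonneg (by linarith) hε.le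
    nlinarith [h7, hdiv]
  linarith

lemma aux_kron (c : ℕ → ℝ) (d : ℕ → ℕ) (hd : ∀ i, d i ≤ 1) (hc0 : ∀ i, d i = 0 → c i = 0)
    (hA : Tendsto (fun n => ∑ i ∈ Finset.Icc 1 n, d i) atTop atTop) (L : ℝ)
    (hN : Tendsto (fun n => ∑ i ∈ Finset.Icc 1 n,
        c i / ((∑ j ∈ Finset.Icc 1 i, d j : ℕ) : ℝ)) atTop (𝓝 L)) :
    Tendsto (fun n => (∑ i ∈ Finset.Icc 1 n, c i) / ((∑ i ∈ Finset.Icc 1 n, d i : ℕ) : ℝ))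
      atTop (𝓝 0) := by
  set A : ℕ → ℕ := fun n => ∑ i ∈ Finset.Icc 1 n, d i with hAdef
  set N : ℕ → ℝ := fun n => ∑ i ∈ Finset.Icc 1 n, c i / (A i : ℝ) with hNdef
  have habel : ∀ n, ∑ i ∈ Finset.Icc 1 n, c i
      = (A n : ℝ) * N n - ∑ i ∈ Finset.Icc 1 n, (d i : ℝ) * N (i-1) := by
    intro n
    induction n with
    | zero => simp [hAdef, hNdef]
    | succ n ih =>
      have hAsucc : A (n+1) = A n + d (n+1) := by
        simp only [hAdef]
        rw [Finset.sum_Icc_succ_top (by omega)]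
      have hNsucc : N (n+1) = N n + c (n+1) / (A (n+1) : ℝ) := by
        simp only [hNdef]
        rw [Finset.sum_Icc_succ_top (by omega)]
      rw [Finset.sum_Icc_succ_top (by omega : 1 ≤ n+1),
        Finset.sum_Icc_succ_top (by omega : 1 ≤ n+1), ih, hNsucc]
      have hn1 : (n+1) - 1 = n := by omega
      rw [hn1]
      rcases Nat.le_one_iff_eq_zero_or_eq_one.1 (hd (n+1)) with h0 | h1
      · rw [h0, hc0 _ h0, hAsucc, h0]
        push_cast
        ring
      · have hA1 : 1 ≤ A (n+1) := by rw [hAsucc, h1]; omega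
        have hAne : ((A (n+1) : ℝ)) ≠ 0 := Nat.cast_ne_zero.2 (by omega)
        have : (A (n+1) : ℝ) * (c (n+1) / (A (n+1) : ℝ)) = c (n+1) := by
          field_simp
        rw [hAsucc, h1]
        push_cast
        have hAne' : ((A n : ℝ) + 1) ≠ 0 := by positivity
        field_simp
        ring
  have hAcast : Tendsto (fun n => (A n : ℝ)) atTop atTop :=
    tendsto_natCast_atTop_atTop.comp hA
  have hdsum : ∀ n, (A n : ℝ) = ∑ i ∈ Finset.Icc 1 n, ((d i : ℝ)) := by
    intro n; simp [hAdef]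
  have hces : Tendsto (fun n => (∑ i ∈ Finset.Icc 1 n, (d i : ℝ) * N (i-1)) / (A n : ℝ))
      atTop (𝓝 L) := by
    have := aux_cesaro (fun i => (d i : ℝ)) (fun i => by positivity)
      (fun i => by show ((d i : ℝ)) ≤ 1; exact_mod_cast hd i)
      (by rw [show (fun n => ∑ i ∈ Finset.Icc 1 n, ((d i : ℝ))) = fun n => (A n : ℝ) from
            funext fun n => (hdsum n).symm]
          exact hAcast)
      (fun i => N (i-1)) L (hN.comp (tendsto_sub_atTop_nat 1))
    simpa [hdsum] using this
  have hNL : Tendsto N atTop (𝓝 L) := hN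
  have hfinal : Tendsto (fun n => N n - (∑ i ∈ Finset.Icc 1 n, (d i : ℝ) * N (i-1)) / (A n : ℝ))
      atTop (𝓝 (L - L)) := hNL.sub hces
  rw [show L - L = 0 from sub_self L] at hfinal
  refine Tendsto.congr' ?_ hfinal
  filter_upwards [hA.eventually_ge_atTop 1] with n hn
  have hAne : ((A n : ℝ)) ≠ 0 := by
    have : (1:ℝ) ≤ (A n : ℝ) := by exact_mod_cast hn
    linarith
  rw [habel n, sub_div]
  congr 1
  rw [mul_comm, mul_div_assoc, div_self hAne, mul_one]

section PointwiseLemmas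

variable {Ω : Type*} (F : ℕ → ℝ) (U : ℕ → Ω → ℝ) (X : ℕ → Ω → ℕ)

/-- The normalized martingale `N_n = ∑ 1{X_i = u} (Y_i − F(u)) / n_u(i)`. -/
def Nproc (u n : ℕ) (ω : Ω) : ℝ :=
  ∑ i ∈ Finset.Icc 1 n,
    if X i ω = u then (resp F U X i ω - F u) / (visits X u i ω : ℝ) else 0

lemma visits_card_eq_sum (u n : ℕ) (ω : Ω) :
    visits X u n ω = ∑ i ∈ Finset.Icc 1 n, if X i ω = u then 1 else 0 := by
  rw [visits, Finset.card_filter]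

lemma visits_succ (u n : ℕ) (ω : Ω) :
    visits X u (n+1) ω = visits X u n ω + if X (n+1) ω = u then 1 else 0 := by
  rw [visits_card_eq_sum, visits_card_eq_sum, Finset.sum_Icc_succ_top (by omega)]

lemma visits_mono (u : ℕ) (ω : Ω) : Monotone (fun n => visits X u n ω) := by
  intro a b hab
  exact Finset.card_le_card (Finset.filter_subset_filter _ (Finset.Icc_subset_Icc le_rfl hab))

lemma visits_pos {u n : ℕ} {ω : Ω} (hn : 1 ≤ n) (h : X n ω = u) : 1 ≤ visits X u n ω := by
  rw [visits]
  refine Finset.card_pos.2 ⟨n, Finset.mem_filter.2 ⟨Finset.mem_Icc.2 ⟨hn, le_rfl⟩, h⟩⟩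

lemma visits_le (u n : ℕ) (ω : Ω) : visits X u n ω ≤ n := by
  calc visits X u n ω ≤ (Finset.Icc 1 n).card := Finset.card_le_card (Finset.filter_subset _ _)
    _ = n := by rw [Nat.card_Icc]; omega

lemma visits_tendsto {u : ℕ} {ω : Ω}
    (h : ∀ N, ∃ n, N ≤ n ∧ 1 ≤ n ∧ X n ω = u) :
    Filter.Tendsto (fun n => visits X u n ω) atTop atTop := by
  have hunb : ∀ b : ℕ, ∃ n, b ≤ visits X u n ω := by
    intro b
    induction b with
    | zero => exact ⟨0, Nat.zero_le _⟩
    | succ b ih =>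
      obtain ⟨n, hn⟩ := ih
      obtain ⟨n', hn1, hn2, hn3⟩ := h (n+1)
      refine ⟨n', ?_⟩
      obtain ⟨k, rfl⟩ : ∃ k, n' = k + 1 := ⟨n' - 1, by omega⟩
      rw [visits_succ, hn3, if_pos rfl]
      have : visits X u n ω ≤ visits X u k ω := visits_mono X u ω (by omega)
      omega
  exact tendsto_atTop_atTop_of_monotone (visits_mono X u ω) hunb

/-- If the weighted martingale sums converge and dose `u` is visited infinitely often,
then the empirical frequency at `u` converges to `F u`. -/
lemma fhat_tendsto {u : ℕ} {ω : Ω}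
    (hv : Filter.Tendsto (fun n => visits X u n ω) atTop atTop)
    (hN : ∃ L, Filter.Tendsto (fun n => Nproc F U X u n ω) atTop (𝓝 L)) :
    Filter.Tendsto (fun n => Fhat F U X u n ω) atTop (𝓝 (F u)) := by
  obtain ⟨L, hL⟩ := hN
  set c : ℕ → ℝ := fun i => if X i ω = u then resp F U X i ω - F u else 0 with hc
  set d : ℕ → ℕ := fun i => if X i ω = u then 1 else 0 with hd
  have hdsum : ∀ n, ∑ i ∈ Finset.Icc 1 n, d i = visits X u n ω := by
    intro n; rw [visits_card_eq_sum]
  have hkron : Filter.Tendsto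
      (fun n => (∑ i ∈ Finset.Icc 1 n, c i) / ((∑ i ∈ Finset.Icc 1 n, d i : ℕ) : ℝ))
      atTop (𝓝 0) := by
    refine aux_kron c d (fun i => by simp only [hd]; split <;> omega)
      (fun i hi => by
        simp only [hd] at hi
        simp only [hc]
        split at hi
        · omega
        · rw [if_neg (by assumption)]) ?_ L ?_
    · refine hv.congr fun n => (hdsum n).symm
    · refine hL.congr fun n => ?_
      rw [Nproc]
      refine Finset.sum_congr rfl fun i _ => ?_
      rw [hdsum i]
      simp only [hc]
      split
      · rfl
      · rw [zero_div]
  have hsplit : ∀ n, ∑ i ∈ Finset.Icc 1 n, c i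
      = (∑ i ∈ Finset.Icc 1 n, if X i ω = u then resp F U X i ω else 0)
        - F u * (visits X u n ω : ℝ) := by
    intro n
    rw [← hdsum, Nat.cast_sum, Finset.mul_sum, ← Finset.sum_sub_distrib]
    refine Finset.sum_congr rfl fun i _ => ?_
    simp only [hc, hd]
    split <;> simp
  have heq : ∀ᶠ n in atTop, Fhat F U X u n ω
      = F u + (∑ i ∈ Finset.Icc 1 n, c i) / ((∑ i ∈ Finset.Icc 1 n, d i : ℕ) : ℝ) := by
    filter_upwards [hv.eventually_ge_atTop 1] with n hn
    have hAne : ((visits X u n ω : ℝ)) ≠ 0 := Nat.cast_ne_zero.2 (by omega)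
    rw [Fhat, hsplit n, hdsum n, sub_div]
    field_simp
    ring
  have := (tendsto_const_nhds (x := F u) (f := atTop (α := ℕ))).add hkron
  rw [add_zero] at this
  exact Filter.Tendsto.congr' (heq.mono fun n h => h.symm) this

end PointwiseLemmas

section Endgame

/-- Deterministic endgame: for any outcome `ω` where empirical frequencies converge at
infinitely-visited levels, the design eventually settles at level `m`. -/
lemma endgame {Ω : Type*} {m : ℕ} (hm : 1 ≤ m) {F : ℕ → ℝ}
    (hFmono : StrictMonoOn F (Set.Icc 1 m))
    {U : ℕ → Ω → ℝ} {X : ℕ → Ω → ℕ} {p Δ₁ Δ₂ : ℝ}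
    (hp : p ∈ Set.Ioo (0:ℝ) 1) (hΔ₁ : 0 < Δ₁) (hΔ₂ : 0 < Δ₂)
    (hrule : intervalRule m p Δ₁ Δ₂ F U X) (hbound : F m ≤ p - Δ₁)
    (ω : Ω) (hXrange : ∀ i, 1 ≤ i → X i ω ∈ Set.Icc 1 m)
    (hconv : ∀ u, u ∈ Finset.Icc 1 m →
      Filter.Tendsto (fun n => visits X u n ω) atTop atTop →
      Filter.Tendsto (fun n => Fhat F U X u n ω) atTop (𝓝 (F u))) :
    ∃ N, ∀ n, N ≤ n → X n ω = m := by
  classical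
  set S := (Finset.Icc 1 m).filter (fun u => ∀ N, ∃ n, N ≤ n ∧ 1 ≤ n ∧ X n ω = u) with hSdef
  have hS : S.Nonempty := by
    by_contra h
    rw [Finset.not_nonempty_iff_eq_empty] at h
    have h2 : ∀ u ∈ Finset.Icc 1 m, ∃ N, ∀ n, N ≤ n → ¬(1 ≤ n ∧ X n ω = u) := by
      intro u hu
      by_contra h3
      push_neg at h3
      have hmem : u ∈ S := by
        refine Finset.mem_filter.2 ⟨hu, fun N => ?_⟩
        obtain ⟨n, hn1, hn2⟩ := h3 N
        exact ⟨n, hn1, hn2⟩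
      rw [h] at hmem
      exact absurd hmem (Finset.notMem_empty u)
    choose! N' hN' using h2
    set n := max ((Finset.Icc 1 m).sup N') 1 with hndef
    have hn1 : 1 ≤ n := le_max_right _ _
    have hu : X n ω ∈ Set.Icc 1 m := hXrange n hn1
    have humem : X n ω ∈ Finset.Icc 1 m := Finset.mem_Icc.2 ⟨hu.1, hu.2⟩
    exact hN' _ humem n (le_trans (Finset.le_sup humem) (le_max_left _ _)) ⟨hn1, rfl⟩
  have hmS : m ∈ S := by
    by_contra hmS
    set u := S.max' hS with hudef
    have huS : u ∈ S := S.max'_mem hS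
    have hu_mem : u ∈ Finset.Icc 1 m := (Finset.mem_filter.1 huS).1
    have hu_io := (Finset.mem_filter.1 huS).2
    have hu_Icc := Finset.mem_Icc.1 hu_mem
    have hum : u < m := lt_of_le_of_ne hu_Icc.2 (fun h => hmS (h ▸ huS))
    have hfu : F u < p - Δ₁ :=
      lt_of_lt_of_le (hFmono ⟨hu_Icc.1, hu_Icc.2⟩ ⟨hm, le_rfl⟩ hum) hbound
    have hft := hconv u hu_mem (visits_tendsto X hu_io)
    obtain ⟨N0, hN0⟩ := eventually_atTop.1 (hft.eventually_lt_const hfu)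
    have hsucc : u + 1 ∈ S := by
      refine Finset.mem_filter.2 ⟨Finset.mem_Icc.2 ⟨by omega, by omega⟩, fun N => ?_⟩
      obtain ⟨n, hn1, hn2, hn3⟩ := hu_io (max N N0)
      have h4 := (hrule n hn2 ω).2.1
        (by rw [hn3]; exact (hN0 n (le_trans (le_max_right _ _) hn1)).le)
      rw [hn3] at h4
      refine ⟨n+1, by omega, by omega, ?_⟩
      rw [h4]
      exact min_eq_left (by omega)
    have := S.le_max' _ hsucc
    rw [← hudef] at this
    omega
  have hm_io := (Finset.mem_filter.1 hmS).2
  have hfm := hconv m (Finset.mem_filter.1 hmS).1 (visits_tendsto X hm_io)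
  have hFm : F m < p + Δ₂ := by
    have := hp.1
    linarith
  obtain ⟨N1, hN1⟩ := eventually_atTop.1 (hfm.eventually_lt_const hFm)
  obtain ⟨n₀, hn₀1, hn₀2, hn₀3⟩ := hm_io (max N1 1)
  refine ⟨n₀, fun n hn => ?_⟩
  induction n, hn using Nat.le_induction with
  | base => exact hn₀3
  | succ n hn ih =>
    have h1 : 1 ≤ n := le_trans (le_trans (le_max_right N1 1) hn₀1) hn
    have hfn : Fhat F U X (X n ω) n ω < p + Δ₂ := by
      rw [ih]
      exact hN1 n (le_trans (le_trans (le_max_left _ _) hn₀1) hn)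
    rcases le_or_gt (Fhat F U X (X n ω) n ω) (p - Δ₁) with hle | hgt
    · have h4 := (hrule n h1 ω).2.1 hle
      rw [h4, ih]
      exact min_eq_right (by omega)
    · have h4 := (hrule n h1 ω).1 hgt hfn
      rw [h4, ih]

end Endgame

section Measurability

variable {Ω : Type*} [mΩ : MeasurableSpace Ω] {F : ℕ → ℝ} {U : ℕ → Ω → ℝ} {X : ℕ → Ω → ℕ}

lemma meas_U_natFilt (hU : ∀ i, Measurable (U i)) {i n : ℕ} (h1 : 1 ≤ i) (h2 : i ≤ n) :
    Measurable[natFilt U hU n] (U i) := by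
  refine measurable_iff_comap_le.2 ?_
  exact le_iSup₂ (f := fun i (_ : i ∈ Finset.Icc 1 n) =>
    MeasurableSpace.comap (U i) inferInstance) i (Finset.mem_Icc.2 ⟨h1, h2⟩)

lemma meas_resp_natFilt (hU : ∀ i, Measurable (U i)) {i n : ℕ} (h1 : 1 ≤ i) (h2 : i ≤ n)
    (hXi : Measurable[natFilt U hU n] (X i)) :
    Measurable[natFilt U hU n] (resp F U X i) := by
  have hs : MeasurableSet[natFilt U hU n] {ω | U i ω ≤ F (X i ω)} :=
    measurableSet_le (meas_U_natFilt hU h1 h2) ((measurable_from_top).comp hXi)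
  exact Measurable.ite hs measurable_const measurable_const

lemma meas_visits_natFilt (hU : ∀ i, Measurable (U i)) {u i n : ℕ}
    (hXi : ∀ j, 1 ≤ j → j ≤ i → Measurable[natFilt U hU n] (X j)) :
    Measurable[natFilt U hU n] (fun ω => visits X u i ω) := by
  have : (fun ω => visits X u i ω)
      = fun ω => ∑ j ∈ Finset.Icc 1 i, if X j ω = u then 1 else 0 :=
    funext fun ω => visits_card_eq_sum X u i ω
  rw [this]
  refine Finset.measurable_sum _ fun j hj => ?_
  have hj' := Finset.mem_Icc.1 hj
  exact Measurable.ite ((hXi j hj'.1 hj'.2) (measurableSet_singleton u))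
    measurable_const measurable_const

lemma meas_Fhat_natFilt (hU : ∀ i, Measurable (U i)) {v n : ℕ}
    (hXi : ∀ j, 1 ≤ j → j ≤ n → Measurable[natFilt U hU n] (X j)) :
    Measurable[natFilt U hU n] (fun ω => Fhat F U X v n ω) := by
  refine Measurable.div ?_ ((measurable_from_top).comp (meas_visits_natFilt hU hXi))
  refine Finset.measurable_sum _ fun j hj => ?_
  have hj' := Finset.mem_Icc.1 hj
  exact Measurable.ite ((hXi j hj'.1 hj'.2) (measurableSet_singleton v))
    (meas_resp_natFilt hU hj'.1 hj'.2 (hXi j hj'.1 hj'.2)) measurable_const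

lemma meas_X_natFilt (hU : ∀ i, Measurable (U i)) {m x₀ : ℕ} {p Δ₁ Δ₂ : ℝ}
    (hX1 : ∀ ω, X 1 ω = x₀)
    (hXrange : ∀ i, 1 ≤ i → ∀ ω, X i ω ∈ Set.Icc 1 m)
    (hrule : intervalRule m p Δ₁ Δ₂ F U X) :
    ∀ n, Measurable[natFilt U hU n] (X (n+1)) := by
  intro n
  induction n using Nat.strong_induction_on with
  | _ n ih =>
    rcases Nat.eq_zero_or_pos n with rfl | hn1
    · have : X 1 = fun _ => x₀ := funext hX1
      rw [this]
      exact measurable_const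
    have hXi : ∀ i, 1 ≤ i → i ≤ n → Measurable[natFilt U hU n] (X i) := by
      intro i hi1 hi2
      obtain ⟨k, rfl⟩ : ∃ k, i = k + 1 := ⟨i - 1, by omega⟩
      exact (ih k (by omega)).mono ((natFilt U hU).mono (by omega)) le_rfl
    have hXn : Measurable[natFilt U hU n] (X n) := hXi n hn1 le_rfl
    have hcomp : Measurable[natFilt U hU n] (fun ω => Fhat F U X (X n ω) n ω) := by
      have he : (fun ω => Fhat F U X (X n ω) n ω)
          = fun ω => ∑ v ∈ Finset.Icc 1 m, if X n ω = v then Fhat F U X v n ω else 0 := by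
        funext ω
        have hx := hXrange n hn1 ω
        rw [Finset.sum_ite_eq, if_pos (Finset.mem_Icc.2 ⟨hx.1, hx.2⟩)]
      rw [he]
      refine Finset.measurable_sum _ fun v _ => ?_
      exact Measurable.ite (hXn (measurableSet_singleton v)) (meas_Fhat_natFilt hU hXi)
        measurable_const
    have hXsucc : X (n+1) = fun ω =>
        if Fhat F U X (X n ω) n ω ≤ p - Δ₁ then min (X n ω + 1) m
        else if p + Δ₂ ≤ Fhat F U X (X n ω) n ω then max (X n ω - 1) 1
        else X n ω := by
      funext ω
      rcases le_or_gt (Fhat F U X (X n ω) n ω) (p - Δ₁) with h | h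
      · rw [if_pos h]
        exact (hrule n hn1 ω).2.1 h
      · rw [if_neg (not_le.2 h)]
        rcases le_or_gt (p + Δ₂) (Fhat F U X (X n ω) n ω) with h2 | h2
        · rw [if_pos h2]
          exact (hrule n hn1 ω).2.2 h2
        · rw [if_neg (not_le.2 h2)]
          exact (hrule n hn1 ω).1 h h2
    rw [hXsucc]
    refine Measurable.ite (measurableSet_le hcomp measurable_const)
      ((measurable_from_top (f := fun k : ℕ => min (k+1) m)).comp hXn) ?_
    exact Measurable.ite (measurableSet_le measurable_const hcomp)
      ((measurable_from_top (f := fun k : ℕ => max (k-1) 1)).comp hXn) hXn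

lemma meas_X_le (hU : ∀ i, Measurable (U i)) {m x₀ : ℕ} {p Δ₁ Δ₂ : ℝ}
    (hX1 : ∀ ω, X 1 ω = x₀)
    (hXrange : ∀ i, 1 ≤ i → ∀ ω, X i ω ∈ Set.Icc 1 m)
    (hrule : intervalRule m p Δ₁ Δ₂ F U X)
    {i n : ℕ} (h1 : 1 ≤ i) (h2 : i ≤ n + 1) :
    Measurable[natFilt U hU n] (X i) := by
  obtain ⟨k, rfl⟩ : ∃ k, i = k + 1 := ⟨i - 1, by omega⟩
  exact (meas_X_natFilt hU hX1 hXrange hrule k).mono ((natFilt U hU).mono (by omega)) le_rfl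

/-- Measurability of the `i`-th increment term of `Nproc` with respect to `ℱ n`, `i ≤ n+1`. -/
lemma meas_term_natFilt (hU : ∀ i, Measurable (U i)) {m x₀ : ℕ} {p Δ₁ Δ₂ : ℝ}
    (hX1 : ∀ ω, X 1 ω = x₀)
    (hXrange : ∀ i, 1 ≤ i → ∀ ω, X i ω ∈ Set.Icc 1 m)
    (hrule : intervalRule m p Δ₁ Δ₂ F U X) (u : ℕ) {i n : ℕ} (h1 : 1 ≤ i) (h2 : i ≤ n) :
    Measurable[natFilt U hU n] (fun ω =>
      if X i ω = u then (resp F U X i ω - F u) / (visits X u i ω : ℝ) else 0) := by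
  have hXi : ∀ j, 1 ≤ j → j ≤ i → Measurable[natFilt U hU n] (X j) :=
    fun j hj1 hj2 => meas_X_le hU hX1 hXrange hrule hj1 (by omega)
  refine Measurable.ite ((hXi i h1 le_rfl) (measurableSet_singleton u)) ?_ measurable_const
  refine Measurable.div ?_ ((measurable_from_top).comp (meas_visits_natFilt hU hXi))
  exact (meas_resp_natFilt hU h1 h2 (hXi i h1 le_rfl)).sub measurable_const

lemma meas_Nproc_natFilt (hU : ∀ i, Measurable (U i)) {m x₀ : ℕ} {p Δ₁ Δ₂ : ℝ}
    (hX1 : ∀ ω, X 1 ω = x₀)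
    (hXrange : ∀ i, 1 ≤ i → ∀ ω, X i ω ∈ Set.Icc 1 m)
    (hrule : intervalRule m p Δ₁ Δ₂ F U X) (u n : ℕ) :
    Measurable[natFilt U hU n] (Nproc F U X u n) := by
  refine Finset.measurable_sum _ fun j hj => ?_
  have hj' := Finset.mem_Icc.1 hj
  exact meas_term_natFilt hU hX1 hXrange hrule u hj'.1 hj'.2

end Measurability

section Probability

variable {Ω : Type*} [mΩ : MeasurableSpace Ω] {P : Measure Ω} [IsProbabilityMeasure P]
variable {F : ℕ → ℝ} {U : ℕ → Ω → ℝ} {X : ℕ → Ω → ℕ}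

lemma indep_natFilt (hU : ∀ i, Measurable (U i))
    (hUindep : iIndepFun U P) (n : ℕ) :
    Indep (natFilt U hU n) (MeasurableSpace.comap (U (n+1)) inferInstance) P := by
  have h2 : iIndep (fun i => MeasurableSpace.comap (U i) inferInstance) P := hUindep
  have h3 := indep_iSup_of_disjoint (fun i => (hU i).comap_le) h2
    (S := {i : ℕ | i ∈ Finset.Icc 1 n}) (T := {n+1})
    (by
      rw [Set.disjoint_singleton_right]
      simp only [Set.mem_setOf_eq, Finset.mem_Icc]
      omega)
  simp only [Set.mem_singleton_iff, iSup_iSup_eq_left] at h3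
  exact h3

lemma integral_resp_const (hU : ∀ i, Measurable (U i))
    (hUdist : ∀ i, Measure.map (U i) P = volume.restrict (Set.Icc (0:ℝ) 1))
    {c : ℝ} (hc : c ∈ Set.Icc (0:ℝ) 1) (j : ℕ) :
    ∫ ω, (if U j ω ≤ c then (1:ℝ) else 0) ∂P = c := by
  have hφ : Measurable (fun x : ℝ => if x ≤ c then (1:ℝ) else 0) :=
    Measurable.ite measurableSet_Iic measurable_const measurable_const
  have h1 : ∫ ω, (if U j ω ≤ c then (1:ℝ) else 0) ∂P
      = ∫ x, (if x ≤ c then (1:ℝ) else 0) ∂(Measure.map (U j) P) :=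
    (integral_map (hU j).aemeasurable hφ.aestronglyMeasurable).symm
  rw [h1, hUdist j]
  have h2 : (fun x : ℝ => if x ≤ c then (1:ℝ) else 0)
      = Set.indicator (Set.Iic c) (fun _ => (1:ℝ)) := by
    funext x
    simp [Set.indicator_apply, Set.mem_Iic]
  rw [h2, integral_indicator_const (1:ℝ) measurableSet_Iic, measureReal_restrict_apply
    measurableSet_Iic]
  have h3 : Set.Iic c ∩ Set.Icc 0 1 = Set.Icc 0 c := by
    ext x
    simp only [Set.mem_inter_iff, Set.mem_Iic, Set.mem_Icc]
    constructor
    · rintro ⟨ha, hb, _⟩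
      exact ⟨hb, ha⟩
    · rintro ⟨ha, hb⟩
      exact ⟨hb, ha, le_trans hb hc.2⟩
  rw [h3, Real.volume_real_Icc_of_le hc.1, smul_eq_mul, mul_one, sub_zero]

lemma integral_H_zero (hU : ∀ i, Measurable (U i))
    (hUdist : ∀ i, Measure.map (U i) P = volume.restrict (Set.Icc (0:ℝ) 1))
    {c : ℝ} (hc : c ∈ Set.Icc (0:ℝ) 1) (j : ℕ) :
    ∫ ω, ((if U j ω ≤ c then (1:ℝ) else 0) - c) ∂P = 0 := by
  have hφ : Measurable (fun ω => if U j ω ≤ c then (1:ℝ) else 0) :=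
    Measurable.ite (measurableSet_le (hU j) measurable_const) measurable_const measurable_const
  have hint : Integrable (fun ω => if U j ω ≤ c then (1:ℝ) else 0) P := by
    refine (integrable_const (1:ℝ)).mono' hφ.aestronglyMeasurable ?_
    refine Filter.Eventually.of_forall fun ω => ?_
    split <;> simp
  rw [integral_sub hint (integrable_const c), integral_const, probReal_univ,
    integral_resp_const hU hUdist hc j]
  simp

/-- Each increment term of `Nproc` has absolute value at most 1. -/
lemma term_abs_le {u : ℕ} (huF : F u ∈ Set.Icc (0:ℝ) 1) {i : ℕ} (ω : Ω) (h1 : 1 ≤ i) :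
    |if X i ω = u then (resp F U X i ω - F u) / (visits X u i ω : ℝ) else 0| ≤ 1 := by
  split
  case isFalse => simp
  case isTrue h =>
    have hA : (1:ℝ) ≤ (visits X u i ω : ℝ) := by exact_mod_cast visits_pos X h1 h
    have hr : |resp F U X i ω - F u| ≤ 1 := by
      rw [abs_le, resp]
      constructor <;> (split <;> [skip; skip] <;> linarith [huF.1, huF.2])
    rw [abs_div, abs_of_nonneg (by linarith : (0:ℝ) ≤ (visits X u i ω : ℝ)),
      div_le_one (by linarith)]
    linarith

lemma nproc_integrable (hU : ∀ i, Measurable (U i)) {m x₀ : ℕ} {p Δ₁ Δ₂ : ℝ}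
    (hX1 : ∀ ω, X 1 ω = x₀)
    (hXrange : ∀ i, 1 ≤ i → ∀ ω, X i ω ∈ Set.Icc 1 m)
    (hrule : intervalRule m p Δ₁ Δ₂ F U X)
    {u : ℕ} (huF : F u ∈ Set.Icc (0:ℝ) 1) (n : ℕ) :
    Integrable (Nproc F U X u n) P := by
  have hNmeas : Measurable (Nproc F U X u n) :=
    (meas_Nproc_natFilt hU hX1 hXrange hrule u n).mono ((natFilt U hU).le n) le_rfl
  refine (integrable_const ((n:ℝ))).mono' hNmeas.aestronglyMeasurable ?_
  refine Filter.Eventually.of_forall fun ω => ?_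
  rw [Real.norm_eq_abs, Nproc]
  calc |∑ i ∈ Finset.Icc 1 n,
        if X i ω = u then (resp F U X i ω - F u) / (visits X u i ω : ℝ) else 0|
      ≤ ∑ i ∈ Finset.Icc 1 n,
        |if X i ω = u then (resp F U X i ω - F u) / (visits X u i ω : ℝ) else 0| :=
        Finset.abs_sum_le_sum_abs _ _
    _ ≤ ∑ _i ∈ Finset.Icc 1 n, (1:ℝ) :=
        Finset.sum_le_sum fun i hi => term_abs_le huF ω (Finset.mem_Icc.1 hi).1
    _ ≤ (n:ℝ) := by
        rw [Finset.sum_const, Nat.card_Icc]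
        simp

lemma nproc_martingale (hU : ∀ i, Measurable (U i))
    (hUindep : iIndepFun U P)
    (hUdist : ∀ i, Measure.map (U i) P = volume.restrict (Set.Icc (0:ℝ) 1))
    {m x₀ : ℕ} {p Δ₁ Δ₂ : ℝ}
    (hX1 : ∀ ω, X 1 ω = x₀)
    (hXrange : ∀ i, 1 ≤ i → ∀ ω, X i ω ∈ Set.Icc 1 m)
    (hrule : intervalRule m p Δ₁ Δ₂ F U X)
    {u : ℕ} (huF : F u ∈ Set.Icc (0:ℝ) 1) :
    Martingale (Nproc F U X u) (natFilt U hU) P := by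
  have hNint : ∀ n, Integrable (Nproc F U X u n) P :=
    fun n => nproc_integrable hU hX1 hXrange hrule huF n
  refine martingale_nat
    (fun n => (meas_Nproc_natFilt hU hX1 hXrange hrule u n).stronglyMeasurable) hNint ?_
  intro n
  set G : Ω → ℝ := fun ω => if X (n+1) ω = u then ((visits X u (n+1) ω : ℝ))⁻¹ else 0 with hGdef
  set H : Ω → ℝ := fun ω => (if U (n+1) ω ≤ F u then 1 else 0) - F u with hHdef
  have hdecomp : Nproc F U X u (n+1) = Nproc F U X u n + fun ω => G ω * H ω := by
    funext ω
    show Nproc F U X u (n+1) ω = Nproc F U X u n ω + G ω * H ω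
    rw [Nproc, Nproc, Finset.sum_Icc_succ_top (by omega : 1 ≤ n+1)]
    congr 1
    by_cases h : X (n+1) ω = u
    · rw [if_pos h]
      simp only [hGdef, hHdef, if_pos h]
      rw [resp, h, div_eq_mul_inv, mul_comm]
    · rw [if_neg h]
      simp only [hGdef, hHdef, if_neg h]
      rw [zero_mul]
  have hGmeasF : Measurable[natFilt U hU n] G := by
    refine Measurable.ite
      ((meas_X_le hU hX1 hXrange hrule (by omega) le_rfl) (measurableSet_singleton u)) ?_
      measurable_const
    exact (measurable_from_top (f := fun k : ℕ => ((k:ℝ))⁻¹)).comp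
      (meas_visits_natFilt hU (fun j hj1 hj2 => meas_X_le hU hX1 hXrange hrule hj1 (by omega)))
  have hGbound : ∀ ω, ‖G ω‖ ≤ 1 := by
    intro ω
    rw [Real.norm_eq_abs]
    simp only [hGdef]
    split
    case isTrue h =>
      have hA : (1:ℝ) ≤ (visits X u (n+1) ω : ℝ) := by
        exact_mod_cast visits_pos X (by omega) h
      rw [abs_of_nonneg (by positivity)]
      exact inv_le_one_of_one_le₀ hA
    case isFalse h => simp
  have hHmeas : Measurable H :=
    (Measurable.ite (measurableSet_le (hU (n+1)) measurable_const) measurable_const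
      measurable_const).sub measurable_const
  have hHbound : ∀ ω, ‖H ω‖ ≤ 1 := by
    intro ω
    rw [Real.norm_eq_abs]
    simp only [hHdef]
    rw [abs_le]
    constructor <;> (split <;> linarith [huF.1, huF.2])
  have hHint : Integrable H P :=
    (integrable_const (1:ℝ)).mono' hHmeas.aestronglyMeasurable
      (Filter.Eventually.of_forall hHbound)
  have hGHint : Integrable (fun ω => G ω * H ω) P := by
    refine (integrable_const (1:ℝ)).mono'
      (((hGmeasF.mono ((natFilt U hU).le n) le_rfl).mul hHmeas).aestronglyMeasurable) ?_
    refine Filter.Eventually.of_forall fun ω => ?_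
    rw [norm_mul]
    calc ‖G ω‖ * ‖H ω‖ ≤ 1 * 1 :=
          mul_le_mul (hGbound ω) (hHbound ω) (norm_nonneg _) zero_le_one
      _ = 1 := mul_one 1
  have hHcond : P[H | natFilt U hU n] =ᵐ[P] fun _ => (0:ℝ) := by
    have hUcm : Measurable[MeasurableSpace.comap (U (n+1)) inferInstance] (U (n+1)) :=
      measurable_iff_comap_le.2 le_rfl
    have hHsm : StronglyMeasurable[MeasurableSpace.comap (U (n+1)) inferInstance] H :=
      ((Measurable.ite (measurableSet_le hUcm measurable_const) measurable_const
        measurable_const).sub measurable_const).stronglyMeasurable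
    have hcie := condExp_indep_eq (μ := P) ((hU (n+1)).comap_le) ((natFilt U hU).le n) hHsm
      ((indep_natFilt hU hUindep n).symm)
    refine hcie.trans (Filter.EventuallyEq.of_eq ?_)
    have h0 : ∫ ω, H ω ∂P = 0 := integral_H_zero hU hUdist huF (n+1)
    funext ω
    simpa using h0
  have hc1 : P[Nproc F U X u (n+1) | natFilt U hU n]
      =ᵐ[P] P[Nproc F U X u n | natFilt U hU n] + P[(fun ω => G ω * H ω) | natFilt U hU n] := by
    rw [hdecomp]
    exact condExp_add (hNint n) hGHint _
  have hc2 : P[Nproc F U X u n | natFilt U hU n] =ᵐ[P] Nproc F U X u n :=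
    Filter.EventuallyEq.of_eq (condExp_of_stronglyMeasurable ((natFilt U hU).le n)
      (meas_Nproc_natFilt hU hX1 hXrange hrule u n).stronglyMeasurable (hNint n))
  have hc3 : P[(fun ω => G ω * H ω) | natFilt U hU n] =ᵐ[P] fun _ => (0:ℝ) := by
    have hmul := condExp_stronglyMeasurable_mul_of_bound ((natFilt U hU).le n)
      hGmeasF.stronglyMeasurable hHint 1 (Filter.Eventually.of_forall hGbound)
    refine (hmul.trans ?_)
    filter_upwards [hHcond] with ω hω
    show G ω * (P[H | natFilt U hU n]) ω = 0
    rw [hω]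
    exact mul_zero _
  refine (hc1.trans ((hc2.add hc3).trans (Filter.EventuallyEq.of_eq ?_))).symm
  funext ω
  exact add_zero _

lemma resp_sub_abs_le {u : ℕ} (huF : F u ∈ Set.Icc (0:ℝ) 1) (i : ℕ) (ω : Ω) :
    |resp F U X i ω - F u| ≤ 1 := by
  rw [abs_le, resp]
  constructor <;> (split <;> linarith [huF.1, huF.2])

/-- Pointwise bound: the sum of inverse squared visit counts along visits is at most 2. -/
lemma visits_sq_sum_le (X : ℕ → Ω → ℕ) (u n : ℕ) (ω : Ω) :
    ∑ i ∈ Finset.Icc 1 n, (if X i ω = u then ((visits X u i ω : ℝ))⁻¹ ^ 2 else 0) ≤ 2 := by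
  classical
  rw [← Finset.sum_filter]
  set s := (Finset.Icc 1 n).filter (fun i => X i ω = u) with hs
  have hmem : ∀ i ∈ s, 1 ≤ i ∧ i ≤ n ∧ X i ω = u := by
    intro i hi
    obtain ⟨h1, h2⟩ := Finset.mem_filter.1 hi
    obtain ⟨h3, h4⟩ := Finset.mem_Icc.1 h1
    exact ⟨h3, h4, h2⟩
  have key : ∀ a ∈ s, ∀ b ∈ s, a < b → visits X u a ω < visits X u b ω := by
    intro a ha b hb hab
    obtain ⟨k, rfl⟩ : ∃ k, b = k + 1 := ⟨b - 1, by omega⟩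
    rw [visits_succ, (hmem _ hb).2.2, if_pos rfl]
    have h5 : visits X u a ω ≤ visits X u k ω := visits_mono X u ω (by omega)
    omega
  have hinj : Set.InjOn (fun i => visits X u i ω) ↑s := by
    intro a ha b hb hab
    by_contra hne
    rcases lt_or_gt_of_ne hne with h | h
    · exact absurd hab (ne_of_lt (key a ha b hb h))
    · exact absurd hab.symm (ne_of_lt (key b hb a ha h))
  calc ∑ i ∈ s, ((visits X u i ω : ℝ))⁻¹ ^ 2
      = ∑ k ∈ s.image (fun i => visits X u i ω), ((k : ℝ))⁻¹ ^ 2 := by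
        rw [Finset.sum_image fun a ha b hb h => hinj ha hb h]
    _ ≤ ∑ k ∈ Finset.Icc 1 n, ((k : ℝ))⁻¹ ^ 2 := by
        refine Finset.sum_le_sum_of_subset_of_nonneg ?_ (fun k _ _ => by positivity)
        intro k hk
        obtain ⟨i, hi, rfl⟩ := Finset.mem_image.1 hk
        exact Finset.mem_Icc.2 ⟨visits_pos X (hmem i hi).1 (hmem i hi).2.2,
          le_trans (visits_le X u i ω) (hmem i hi).2.1⟩
    _ ≤ 2 := by
        refine le_trans (aux_sum_inv_sq n) ?_
        have : (0:ℝ) ≤ ((n:ℝ))⁻¹ := by positivity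
        linarith

lemma nproc_sq_integral_le (hU : ∀ i, Measurable (U i))
    (hUindep : iIndepFun U P)
    (hUdist : ∀ i, Measure.map (U i) P = volume.restrict (Set.Icc (0:ℝ) 1))
    {m x₀ : ℕ} {p Δ₁ Δ₂ : ℝ}
    (hX1 : ∀ ω, X 1 ω = x₀)
    (hXrange : ∀ i, 1 ≤ i → ∀ ω, X i ω ∈ Set.Icc 1 m)
    (hrule : intervalRule m p Δ₁ Δ₂ F U X)
    {u : ℕ} (huF : F u ∈ Set.Icc (0:ℝ) 1) (n : ℕ) :
    ∫ ω, (Nproc F U X u n ω) ^ 2 ∂P ≤ 2 := by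
  classical
  set t : ℕ → Ω → ℝ := fun i ω =>
    if X i ω = u then (resp F U X i ω - F u) / (visits X u i ω : ℝ) else 0 with ht
  have htmeas : ∀ i, 1 ≤ i → Measurable (t i) := fun i h1 =>
    (meas_term_natFilt hU hX1 hXrange hrule u h1 le_rfl).mono ((natFilt U hU).le i) le_rfl
  have htabs : ∀ i ω, 1 ≤ i → |t i ω| ≤ 1 := fun i ω h1 => term_abs_le huF ω h1
  have htint : ∀ i j, 1 ≤ i → 1 ≤ j → Integrable (fun ω => t i ω * t j ω) P := by
    intro i j h1 h2
    refine (integrable_const (1:ℝ)).mono'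
      ((htmeas i h1).mul (htmeas j h2)).aestronglyMeasurable ?_
    refine Filter.Eventually.of_forall fun ω => ?_
    rw [norm_mul, Real.norm_eq_abs, Real.norm_eq_abs]
    calc |t i ω| * |t j ω| ≤ 1 * 1 :=
          mul_le_mul (htabs i ω h1) (htabs j ω h2) (abs_nonneg _) zero_le_one
      _ = 1 := mul_one 1
  set b : ℕ → Ω → ℝ := fun i ω =>
    if X i ω = u then ((visits X u i ω : ℝ))⁻¹ ^ 2 else 0 with hb
  have hXg : ∀ j, 1 ≤ j → Measurable (X j) := by
    intro j hj
    obtain ⟨k, rfl⟩ : ∃ k, j = k + 1 := ⟨j - 1, by omega⟩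
    exact (meas_X_natFilt hU hX1 hXrange hrule k).mono ((natFilt U hU).le k) le_rfl
  have hvisg : ∀ i, Measurable (fun ω => visits X u i ω) := by
    intro i
    have : (fun ω => visits X u i ω)
        = fun ω => ∑ j ∈ Finset.Icc 1 i, if X j ω = u then 1 else 0 :=
      funext fun ω => visits_card_eq_sum X u i ω
    rw [this]
    refine Finset.measurable_sum _ fun j hj => ?_
    exact Measurable.ite ((hXg j (Finset.mem_Icc.1 hj).1) (measurableSet_singleton u))
      measurable_const measurable_const
  have hbmeas : ∀ i, 1 ≤ i → Measurable (b i) := by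
    intro i h1
    refine Measurable.ite ((hXg i h1) (measurableSet_singleton u)) ?_ measurable_const
    exact (measurable_from_top (f := fun k : ℕ => ((k:ℝ))⁻¹ ^ 2)).comp (hvisg i)
  have hbabs : ∀ i ω, 1 ≤ i → ‖b i ω‖ ≤ 1 := by
    intro i ω h1
    rw [Real.norm_eq_abs]
    simp only [hb]
    split
    case isTrue h =>
      have hA : (1:ℝ) ≤ (visits X u i ω : ℝ) := by exact_mod_cast visits_pos X h1 h
      rw [abs_of_nonneg (by positivity)]
      calc ((visits X u i ω : ℝ))⁻¹ ^ 2 ≤ 1 ^ 2 := by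
            refine pow_le_pow_left₀ (by positivity) ?_ 2
            exact inv_le_one_of_one_le₀ hA
        _ = 1 := one_pow 2
    case isFalse h => simp
  have hbint : ∀ i, 1 ≤ i → Integrable (b i) P := fun i h1 =>
    (integrable_const (1:ℝ)).mono' (hbmeas i h1).aestronglyMeasurable
      (Filter.Eventually.of_forall fun ω => hbabs i ω h1)
  have hcross : ∀ i j, 1 ≤ i → i < j → ∫ ω, t i ω * t j ω ∂P = 0 := by
    intro i j h1 hij
    obtain ⟨k, rfl⟩ : ∃ k, j = k + 1 := ⟨j - 1, by omega⟩
    set G : Ω → ℝ := fun ω =>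
      if X (k+1) ω = u then ((visits X u (k+1) ω : ℝ))⁻¹ else 0 with hGdef
    set H : Ω → ℝ := fun ω => (if U (k+1) ω ≤ F u then 1 else 0) - F u with hHdef
    have hGH : ∀ ω, t (k+1) ω = G ω * H ω := by
      intro ω
      simp only [ht, hGdef, hHdef]
      by_cases h : X (k+1) ω = u
      · rw [if_pos h, if_pos h, resp, h, div_eq_mul_inv, mul_comm]
      · rw [if_neg h, if_neg h, zero_mul]
    have hGmeasF : Measurable[natFilt U hU k] G := by
      refine Measurable.ite
        ((meas_X_le hU hX1 hXrange hrule (by omega) le_rfl) (measurableSet_singleton u)) ?_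
        measurable_const
      exact (measurable_from_top (f := fun j : ℕ => ((j:ℝ))⁻¹)).comp
        (meas_visits_natFilt hU (fun j hj1 hj2 => meas_X_le hU hX1 hXrange hrule hj1 (by omega)))
    have htiF : Measurable[natFilt U hU k] (t i) :=
      meas_term_natFilt hU hX1 hXrange hrule u h1 (by omega)
    have hfG : Measurable[natFilt U hU k] (fun ω => t i ω * G ω) := htiF.mul hGmeasF
    have hUcm : Measurable[MeasurableSpace.comap (U (k+1)) inferInstance] (U (k+1)) :=
      measurable_iff_comap_le.2 le_rfl
    have hHm : Measurable[MeasurableSpace.comap (U (k+1)) inferInstance] H :=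
      (Measurable.ite (measurableSet_le hUcm measurable_const) measurable_const
        measurable_const).sub measurable_const
    have hindepf : IndepFun (fun ω => t i ω * G ω) H P := by
      have h3 : Indep (natFilt U hU k)
          (MeasurableSpace.comap (U (k+1)) inferInstance) P := indep_natFilt hU hUindep k
      exact indep_of_indep_of_le_left
        (indep_of_indep_of_le_right h3 (measurable_iff_comap_le.1 hHm))
        (measurable_iff_comap_le.1 hfG)
    have hGbound : ∀ ω, |G ω| ≤ 1 := by
      intro ω
      simp only [hGdef]
      split
      case isTrue h =>
        have hA : (1:ℝ) ≤ (visits X u (k+1) ω : ℝ) := by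
          exact_mod_cast visits_pos X (by omega) h
        rw [abs_of_nonneg (by positivity)]
        exact inv_le_one_of_one_le₀ hA
      case isFalse h => simp
    have hHbound : ∀ ω, ‖H ω‖ ≤ 1 := by
      intro ω
      rw [Real.norm_eq_abs]
      simp only [hHdef]
      rw [abs_le]
      constructor <;> (split <;> linarith [huF.1, huF.2])
    have hint1 : Integrable (fun ω => t i ω * G ω) P := by
      refine (integrable_const (1:ℝ)).mono'
        ((hfG.mono ((natFilt U hU).le k) le_rfl)).aestronglyMeasurable ?_
      refine Filter.Eventually.of_forall fun ω => ?_
      rw [norm_mul, Real.norm_eq_abs, Real.norm_eq_abs]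
      calc |t i ω| * |G ω| ≤ 1 * 1 :=
            mul_le_mul (htabs i ω h1) (hGbound ω) (abs_nonneg _) zero_le_one
        _ = 1 := mul_one 1
    have hHint : Integrable H P :=
      (integrable_const (1:ℝ)).mono'
        ((hHm.mono ((hU (k+1)).comap_le) le_rfl)).aestronglyMeasurable
        (Filter.Eventually.of_forall hHbound)
    have heq : (fun ω => t i ω * t (k+1) ω) = (fun ω => t i ω * G ω) * H := by
      funext ω
      show t i ω * t (k+1) ω = t i ω * G ω * H ω
      rw [hGH ω, mul_assoc]
    rw [heq, hindepf.integral_mul_eq_mul_integral hint1.aestronglyMeasurable hHint.aestronglyMeasurable,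
      integral_H_zero hU hUdist huF (k+1), mul_zero]
  have hdiag : ∀ i, 1 ≤ i → ∫ ω, t i ω * t i ω ∂P ≤ ∫ ω, b i ω ∂P := by
    intro i h1
    refine integral_mono (htint i i h1 h1) (hbint i h1) fun ω => ?_
    simp only [ht, hb]
    by_cases h : X i ω = u
    · rw [if_pos h, if_pos h]
      have hA : (1:ℝ) ≤ (visits X u i ω : ℝ) := by exact_mod_cast visits_pos X h1 h
      have hr : (resp F U X i ω - F u) ^ 2 ≤ 1 := by
        nlinarith [resp_sub_abs_le (U := U) (X := X) huF i ω, abs_nonneg (resp F U X i ω - F u),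
          sq_abs (resp F U X i ω - F u)]
      calc (resp F U X i ω - F u) / (visits X u i ω : ℝ)
            * ((resp F U X i ω - F u) / (visits X u i ω : ℝ))
          = (resp F U X i ω - F u) ^ 2 / ((visits X u i ω : ℝ)) ^ 2 := by
            rw [div_mul_div_comm, ← pow_two, ← pow_two]
        _ ≤ 1 / ((visits X u i ω : ℝ)) ^ 2 := by gcongr
        _ = ((visits X u i ω : ℝ))⁻¹ ^ 2 := by rw [one_div, inv_pow]
    · rw [if_neg h, if_neg h, zero_mul]
  have hexp : (fun ω => (Nproc F U X u n ω) ^ 2)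
      = fun ω => ∑ i ∈ Finset.Icc 1 n, ∑ j ∈ Finset.Icc 1 n, t i ω * t j ω := by
    funext ω
    rw [show Nproc F U X u n ω = ∑ i ∈ Finset.Icc 1 n, t i ω from rfl, pow_two,
      Finset.sum_mul_sum]
  rw [hexp]
  rw [integral_finset_sum _ (fun i hi => integrable_finset_sum _
    (fun j hj => htint i j (Finset.mem_Icc.1 hi).1 (Finset.mem_Icc.1 hj).1))]
  have hstep : ∀ i ∈ Finset.Icc 1 n,
      (∫ ω, ∑ j ∈ Finset.Icc 1 n, t i ω * t j ω ∂P)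
        = ∑ j ∈ Finset.Icc 1 n, ∫ ω, t i ω * t j ω ∂P := fun i hi =>
    integral_finset_sum _ (fun j hj => htint i j (Finset.mem_Icc.1 hi).1 (Finset.mem_Icc.1 hj).1)
  rw [Finset.sum_congr rfl hstep]
  have hbound : ∀ i ∈ Finset.Icc 1 n, ∑ j ∈ Finset.Icc 1 n, (∫ ω, t i ω * t j ω ∂P)
      ≤ ∫ ω, b i ω ∂P := by
    intro i hi
    have hi' := Finset.mem_Icc.1 hi
    calc ∑ j ∈ Finset.Icc 1 n, (∫ ω, t i ω * t j ω ∂P)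
        ≤ ∑ j ∈ Finset.Icc 1 n, (if i = j then ∫ ω, b i ω ∂P else 0) := by
          refine Finset.sum_le_sum fun j hj => ?_
          have hj' := Finset.mem_Icc.1 hj
          by_cases h : i = j
          · subst h
            rw [if_pos rfl]
            exact hdiag i hi'.1
          · rw [if_neg h]
            rcases Nat.lt_or_ge i j with hlt | hge
            · exact le_of_eq (hcross i j hi'.1 hlt)
            · have hlt2 : j < i := by omega
              have : ∫ ω, t i ω * t j ω ∂P = ∫ ω, t j ω * t i ω ∂P := by
                congr 1
                funext ω
                rw [mul_comm]
              rw [this]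
              exact le_of_eq (hcross j i hj'.1 hlt2)
      _ = ∫ ω, b i ω ∂P := by rw [Finset.sum_ite_eq, if_pos hi]
  calc ∑ i ∈ Finset.Icc 1 n, ∑ j ∈ Finset.Icc 1 n, (∫ ω, t i ω * t j ω ∂P)
      ≤ ∑ i ∈ Finset.Icc 1 n, ∫ ω, b i ω ∂P := Finset.sum_le_sum hbound
    _ = ∫ ω, ∑ i ∈ Finset.Icc 1 n, b i ω ∂P :=
        (integral_finset_sum _ (fun i hi => hbint i (Finset.mem_Icc.1 hi).1)).symm
    _ ≤ ∫ ω, (2:ℝ) ∂P := by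
        refine integral_mono (integrable_finset_sum _
          (fun i hi => hbint i (Finset.mem_Icc.1 hi).1)) (integrable_const 2)
          fun ω => ?_
        exact visits_sq_sum_le X u n ω
    _ = 2 := by rw [integral_const, probReal_univ, one_smul]

lemma nproc_ae_converges (hU : ∀ i, Measurable (U i))
    (hUindep : iIndepFun U P)
    (hUdist : ∀ i, Measure.map (U i) P = volume.restrict (Set.Icc (0:ℝ) 1))
    {m x₀ : ℕ} {p Δ₁ Δ₂ : ℝ}
    (hX1 : ∀ ω, X 1 ω = x₀)
    (hXrange : ∀ i, 1 ≤ i → ∀ ω, X i ω ∈ Set.Icc 1 m)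
    (hrule : intervalRule m p Δ₁ Δ₂ F U X)
    {u : ℕ} (huF : F u ∈ Set.Icc (0:ℝ) 1) :
    ∀ᵐ ω ∂P, ∃ L, Filter.Tendsto (fun n => Nproc F U X u n ω) atTop (𝓝 L) := by
  refine Submartingale.exists_ae_tendsto_of_bdd (R := 2)
    (nproc_martingale hU hUindep hUdist hX1 hXrange hrule huF).submartingale ?_
  intro n
  have hNint : Integrable (Nproc F U X u n) P :=
    nproc_integrable hU hX1 hXrange hrule huF n
  have hNmeas : Measurable (Nproc F U X u n) :=
    (meas_Nproc_natFilt hU hX1 hXrange hrule u n).mono ((natFilt U hU).le n) le_rfl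
  have hNabs : ∀ ω, |Nproc F U X u n ω| ≤ (n:ℝ) := by
    intro ω
    rw [Nproc]
    calc |∑ i ∈ Finset.Icc 1 n,
          if X i ω = u then (resp F U X i ω - F u) / (visits X u i ω : ℝ) else 0|
        ≤ ∑ i ∈ Finset.Icc 1 n,
          |if X i ω = u then (resp F U X i ω - F u) / (visits X u i ω : ℝ) else 0| :=
          Finset.abs_sum_le_sum_abs _ _
      _ ≤ ∑ _i ∈ Finset.Icc 1 n, (1:ℝ) :=
          Finset.sum_le_sum fun i hi => term_abs_le huF ω (Finset.mem_Icc.1 hi).1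
      _ ≤ (n:ℝ) := by
          rw [Finset.sum_const, Nat.card_Icc]
          simp
  have hNsq_int : Integrable (fun ω => (Nproc F U X u n ω) ^ 2) P := by
    refine (integrable_const ((n:ℝ) ^ 2)).mono'
      (hNmeas.pow_const 2).aestronglyMeasurable ?_
    refine Filter.Eventually.of_forall fun ω => ?_
    rw [Real.norm_eq_abs, abs_of_nonneg (sq_nonneg _), ← sq_abs]
    exact pow_le_pow_left₀ (abs_nonneg _) (hNabs ω) 2
  have hsq := nproc_sq_integral_le hU hUindep hUdist hX1 hXrange hrule huF n
  have habs : ∫ ω, |Nproc F U X u n ω| ∂P ≤ 2 := by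
    have hptw : ∀ ω, |Nproc F U X u n ω| ≤ (1 + (Nproc F U X u n ω) ^ 2) / 2 := by
      intro ω
      nlinarith [sq_nonneg (|Nproc F U X u n ω| - 1), sq_abs (Nproc F U X u n ω)]
    have hint2 : Integrable (fun ω => (1 + (Nproc F U X u n ω) ^ 2) / 2) P :=
      ((integrable_const (1:ℝ)).add hNsq_int).div_const 2
    calc ∫ ω, |Nproc F U X u n ω| ∂P
        ≤ ∫ ω, (1 + (Nproc F U X u n ω) ^ 2) / 2 ∂P :=
          integral_mono hNint.abs hint2 hptw
      _ = (∫ ω, (1 + (Nproc F U X u n ω) ^ 2) ∂P) / 2 := integral_div 2 _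
      _ = (1 + ∫ ω, (Nproc F U X u n ω) ^ 2 ∂P) / 2 := by
          rw [integral_add (integrable_const 1) hNsq_int, integral_const, probReal_univ,
            one_smul]
      _ ≤ 2 := by linarith
  rw [eLpNorm_one_eq_lintegral_enorm, ← ofReal_integral_norm_eq_lintegral_enorm hNint]
  have h2 : ∫ ω, ‖Nproc F U X u n ω‖ ∂P ≤ 2 := by
    simpa [Real.norm_eq_abs] using habs
  calc ENNReal.ofReal (∫ ω, ‖Nproc F U X u n ω‖ ∂P) ≤ ENNReal.ofReal 2 :=
        ENNReal.ofReal_le_ofReal h2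
    _ = ((2 : NNReal) : ENNReal) := by norm_num

end Probability

/-- **Theorem 1(ii), upper boundary case.** If `F(m) ≤ p−Δ₁` (so that the MTD
is the highest level `u* = m`), then almost surely the interval design eventually settles at
level `m`. -/
theorem interval_design_converges_upper_boundary
    {Ω : Type*} [MeasurableSpace Ω] (P : Measure Ω) [IsProbabilityMeasure P]
    (m : ℕ) (hm : 1 ≤ m)
    (F : ℕ → ℝ) (hFmono : StrictMonoOn F (Set.Icc 1 m))
    (hF01 : ∀ v ∈ Set.Icc 1 m, F v ∈ Set.Icc (0:ℝ) 1)
    (U : ℕ → Ω → ℝ) (hUmeas : ∀ i, Measurable (U i))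
    (hUindep : iIndepFun U P)
    (hUdist : ∀ i, Measure.map (U i) P = volume.restrict (Set.Icc (0:ℝ) 1))
    (X : ℕ → Ω → ℕ) (hXmeas : ∀ i, Measurable (X i))
    (hXrange : ∀ i, 1 ≤ i → ∀ ω, X i ω ∈ Set.Icc 1 m)
    (x₀ : ℕ) (hx₀ : x₀ ∈ Set.Icc 1 m) (hX1 : ∀ ω, X 1 ω = x₀)
    (p Δ₁ Δ₂ : ℝ) (hp : p ∈ Set.Ioo (0:ℝ) 1) (hΔ₁ : 0 < Δ₁) (hΔ₂ : 0 < Δ₂)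
    (hrule : intervalRule m p Δ₁ Δ₂ F U X)
    (hbound : F m ≤ p - Δ₁) :
    ∀ᵐ ω ∂P, ∃ N, ∀ n, N ≤ n → X n ω = m := by
  have hae : ∀ᵐ ω ∂P, ∀ u : ℕ, u ∈ Finset.Icc 1 m →
      ∃ L, Filter.Tendsto (fun n => Nproc F U X u n ω) atTop (𝓝 L) := by
    rw [ae_all_iff]
    intro u
    by_cases hu : u ∈ Finset.Icc 1 m
    · have huIcc := Finset.mem_Icc.1 hu
      have huF : F u ∈ Set.Icc (0:ℝ) 1 := hF01 u ⟨huIcc.1, huIcc.2⟩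
      filter_upwards [nproc_ae_converges hUmeas hUindep hUdist hX1 hXrange hrule huF] with ω hω _
      exact hω
    · exact Filter.Eventually.of_forall fun ω h => absurd h hu
  filter_upwards [hae] with ω hω
  refine endgame hm hFmono hp hΔ₁ hΔ₂ hrule hbound ω (fun i hi => hXrange i hi ω) ?_
  intro u hu hvis
  exact fhat_tendsto F U X hvis (hω u hu)
end
end
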